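/- arXiv:1907.02304 — 5 statements merged into one kernel-verified Lean document; each statement's English description precedes it below -/
import Mathlib

section
/- For every natural number n there exists a constant C(n) > 0 such that for all nonzero x, y ∈ ℝ³ one has ‖DⁿΦ(x) − DⁿΦ(y)‖ ≤ C(n)·(‖x‖^{−(2+n)} + ‖y‖^{−(2+n)})·‖x − y‖, where DⁿΦ is the n-th Fréchet derivative of the Oseen tensor (the case n = 0 reads ‖Φ(x) − Φ(y)‖ ≤ C(‖x‖⁻² + ‖y‖⁻²)‖x − y‖). -/
noncomputable section

/-- Euclidean `ℝ³`. -/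
abbrev E3 : Type := EuclideanSpace ℝ (Fin 3)

/-- The Oseen tensor `Φ(x) = (1/(8π)) (‖x‖⁻¹ I + ‖x‖⁻³ x xᵀ)`, viewed as a continuous
linear map on `ℝ³` (the outer product `x xᵀ` acts as `y ↦ ⟪x, y⟫ x`).
For `x = 0` the formula gives `0` by the convention `0⁻¹ = 0`. -/
def oseenTensor (x : E3) : E3 →L[ℝ] E3 :=
  (8 * Real.pi)⁻¹ • (‖x‖⁻¹ • ContinuousLinearMap.id ℝ E3 +
    (‖x‖ ^ 3)⁻¹ • (innerSL ℝ x).smulRight x)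

lemma oseen_contDiffAt {x : E3} (hx : x ≠ 0) : ContDiffAt ℝ ⊤ oseenTensor x := by
  have hn : ContDiffAt ℝ ⊤ (fun y : E3 => ‖y‖) x := contDiffAt_norm ℝ hx
  have h1 : ContDiffAt ℝ ⊤ (fun y : E3 => ‖y‖⁻¹ • ContinuousLinearMap.id ℝ E3) x :=
    (hn.inv (norm_ne_zero_iff.2 hx)).smul contDiffAt_const
  have hb : ContDiff ℝ ⊤ (fun y : E3 => (innerSL ℝ y).smulRight y) := by
    have := (isBoundedBilinearMap_smulRight (𝕜 := ℝ) (E := E3) (F := E3)).contDiff (n := ⊤)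
    exact this.comp (ContDiff.prodMk ((innerSL ℝ (E := E3)).contDiff (n := ⊤)) contDiff_id)
  have h2 : ContDiffAt ℝ ⊤ (fun y : E3 => (‖y‖ ^ 3)⁻¹ • (innerSL ℝ y).smulRight y) x :=
    ((hn.pow 3).inv (pow_ne_zero 3 (norm_ne_zero_iff.2 hx))).smul hb.contDiffAt
  unfold oseenTensor
  exact (h1.add h2).const_smul (8 * Real.pi)⁻¹

lemma oseen_smul {c : ℝ} (hc : 0 < c) {x : E3} (hx : x ≠ 0) :
    oseenTensor (c • x) = c⁻¹ • oseenTensor x := by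
  ext v
  simp only [oseenTensor, ContinuousLinearMap.smul_apply, ContinuousLinearMap.add_apply,
    ContinuousLinearMap.id_apply, ContinuousLinearMap.smulRight_apply, innerSL_apply_apply,
    norm_smul, Real.norm_eq_abs, abs_of_pos hc, real_inner_smul_left, mul_pow]
  simp only [PiLp.smul_apply, PiLp.add_apply, smul_eq_mul]
  field_simp [hc.ne', norm_ne_zero_iff.2 hx]
lemma oseen_zero : oseenTensor 0 = 0 := by
  ext v
  simp [oseenTensor]

lemma oseen_smul' {c : ℝ} (hc : 0 < c) (x : E3) :
    oseenTensor (c • x) = c⁻¹ • oseenTensor x := by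
  rcases eq_or_ne x 0 with rfl | hx
  · ext v
    simp [oseen_zero]
  · exact oseen_smul hc hx

lemma oseen_contDiffOn : ContDiffOn ℝ ⊤ oseenTensor {(0:E3)}ᶜ :=
  fun _ hx => (oseen_contDiffAt hx).contDiffWithinAt

set_option maxHeartbeats 1000000 in
lemma oseen_iterated_bound (n : ℕ) : ∃ M : ℝ, 0 < M ∧ ∀ x : E3, x ≠ 0 →
    ‖iteratedFDeriv ℝ n oseenTensor x‖ ≤ M * (‖x‖ ^ (n + 1))⁻¹ := by
  set A := iteratedFDeriv ℝ n oseenTensor with hA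
  -- continuity on the sphere
  have hcont : ContinuousOn A (Metric.sphere (0:E3) 1) := by
    intro z hz
    have hz0 : z ≠ 0 := by
      intro h; rw [h] at hz; simp at hz
    exact ((((oseen_contDiffAt hz0).of_le le_top).iteratedFDeriv_right (m := 0) le_top).continuousAt).continuousWithinAt
  have hsne : (Metric.sphere (0:E3) 1).Nonempty :=
    NormedSpace.sphere_nonempty.2 zero_le_one
  obtain ⟨z₀, hz₀, hmax⟩ := (isCompact_sphere (0:E3) 1).exists_isMaxOn hsne hcont.norm
  refine ⟨‖A z₀‖ + 1, by positivity, fun x hx => ?_⟩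
  set c : ℝ := ‖x‖ with hc
  have hcpos : 0 < c := norm_pos_iff.2 hx
  set u : E3 := c⁻¹ • x with hu
  have hunorm : ‖u‖ = 1 := by
    rw [hu, norm_smul, norm_inv, Real.norm_eq_abs, abs_of_pos hcpos]
    field_simp
    exact hc.symm
  have hu0 : u ≠ 0 := by
    intro h; rw [h] at hunorm; simp at hunorm
  have hxcu : x = c • u := by
    rw [hu, smul_smul, mul_inv_cancel₀ hcpos.ne', one_smul]
  -- the scaling continuous linear map
  set g : E3 →L[ℝ] E3 := c • ContinuousLinearMap.id ℝ E3 with hg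
  have hgapp : ∀ y : E3, g y = c • y := fun y => rfl
  set s : Set E3 := {(0:E3)}ᶜ with hs
  have hsopen : IsOpen s := isOpen_compl_singleton
  have hpre : IsOpen (g ⁻¹' s) := hsopen.preimage g.continuous
  have hus : u ∈ g ⁻¹' s := by
    simp only [Set.mem_preimage, hgapp, hs, Set.mem_compl_iff, Set.mem_singleton_iff]
    rw [← hxcu]; exact hx
  have hgu : g u = x := by rw [hgapp, ← hxcu]
  -- key identity
  have key : iteratedFDeriv ℝ n (oseenTensor ∘ g) u =
      (A x).compContinuousLinearMap (fun _ => g) := by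
    rw [← iteratedFDerivWithin_of_isOpen n hpre hus,
      ContinuousLinearMap.iteratedFDerivWithin_comp_right g oseen_contDiffOn
        hsopen.uniqueDiffOn hpre.uniqueDiffOn (by rw [hgu]; exact hx) le_top,
      hgu, iteratedFDerivWithin_of_isOpen n hsopen hx]
  have hcomp : oseenTensor ∘ g = c⁻¹ • oseenTensor := by
    funext y
    exact oseen_smul' hcpos y
  have key2 : iteratedFDeriv ℝ n (oseenTensor ∘ g) u = c⁻¹ • A u := by
    rw [hcomp, ← iteratedFDerivWithin_of_isOpen n hsopen hu0,
      iteratedFDerivWithin_const_smul_apply ((oseen_contDiffOn u hu0).of_le le_top)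
        hsopen.uniqueDiffOn hu0,
      iteratedFDerivWithin_of_isOpen n hsopen hu0]
  -- unwrap: A x = ((A x).compCLM g).compCLM g'
  set g' : E3 →L[ℝ] E3 := c⁻¹ • ContinuousLinearMap.id ℝ E3 with hg'
  have hunwrap : A x = ((A x).compContinuousLinearMap (fun _ => g)).compContinuousLinearMap
      (fun _ => g') := by
    refine ContinuousMultilinearMap.ext fun m => ?_
    simp only [ContinuousMultilinearMap.compContinuousLinearMap_apply]
    have harg : (fun i => g (g' (m i))) = m := by
      funext i
      simp only [hg, hg', ContinuousLinearMap.smul_apply, ContinuousLinearMap.id_apply,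
        smul_smul, mul_inv_cancel₀ hcpos.ne', one_smul]
    rw [harg]
  have hg'le : ‖g'‖ ≤ c⁻¹ := by
    refine ContinuousLinearMap.opNorm_le_bound _ (by positivity) fun y => ?_
    have hy : g' y = c⁻¹ • y := rfl
    rw [hy, norm_smul, Real.norm_eq_abs, abs_of_pos (inv_pos.2 hcpos)]
  have hprod : ∏ _i : Fin n, ‖g'‖ ≤ (c⁻¹) ^ n := by
    rw [Finset.prod_const, Finset.card_univ, Fintype.card_fin]
    exact pow_le_pow_left₀ (norm_nonneg _) hg'le n
  have h1 : ‖(A x).compContinuousLinearMap (fun _ => g)‖ = c⁻¹ * ‖A u‖ := by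
    rw [← key, key2, norm_smul c⁻¹ (A u), Real.norm_eq_abs, abs_of_pos (inv_pos.2 hcpos)]
  have h2 : ‖A u‖ ≤ ‖A z₀‖ + 1 := by
    have := isMaxOn_iff.mp hmax u
      (by simpa [Metric.mem_sphere, dist_zero_right] using hunorm)
    simpa using this.trans (by linarith)
  calc ‖A x‖ ≤ ‖(A x).compContinuousLinearMap (fun _ => g)‖ * ∏ _i : Fin n, ‖g'‖ := by
        conv_lhs => rw [hunwrap]
        exact ContinuousMultilinearMap.norm_compContinuousLinearMap_le
          ((A x).compContinuousLinearMap (fun _ => g)) (fun _ => g')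
    _ ≤ (c⁻¹ * (‖A z₀‖ + 1)) * (c⁻¹) ^ n := by
        refine mul_le_mul ?_ hprod (Finset.prod_nonneg fun _ _ => norm_nonneg _) (by positivity)
        rw [h1]
        gcongr
    _ = (‖A z₀‖ + 1) * (c ^ (n + 1))⁻¹ := by
        rw [pow_succ, mul_inv, inv_pow]
        ring

lemma oseen_diffAt (n : ℕ) {z : E3} (hz : z ≠ 0) :
    DifferentiableAt ℝ (iteratedFDeriv ℝ n oseenTensor) z :=
  ((oseen_contDiffAt hz).iteratedFDeriv_right (m := 1) le_top).differentiableAt one_ne_zero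

set_option maxHeartbeats 1000000 in
/-- for every `n` there is `C(n) > 0` such that for all nonzero `x, y ∈ ℝ³`,
`‖DⁿΦ(x) − DⁿΦ(y)‖ ≤ C(n) (‖x‖^{−(2+n)} + ‖y‖^{−(2+n)}) ‖x − y‖`. -/
theorem oseenTensor_iteratedFDeriv_lipschitz_decay :
    ∀ n : ℕ, ∃ C : ℝ, 0 < C ∧ ∀ x y : E3, x ≠ 0 → y ≠ 0 →
      ‖iteratedFDeriv ℝ n oseenTensor x - iteratedFDeriv ℝ n oseenTensor y‖
        ≤ C * ((‖x‖ ^ (2 + n))⁻¹ + (‖y‖ ^ (2 + n))⁻¹) * ‖x - y‖ := by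
  intro n
  obtain ⟨M, hM, hMb⟩ := oseen_iterated_bound n
  obtain ⟨M', hM', hM'b⟩ := oseen_iterated_bound (n + 1)
  set C : ℝ := 3 * M + 2 ^ (n + 2) * M' with hC
  have hCpos : 0 < C := by positivity
  refine ⟨C, hCpos, ?_⟩
  set A := iteratedFDeriv ℝ n oseenTensor with hA
  have key : ∀ x y : E3, x ≠ 0 → y ≠ 0 → ‖x‖ ≤ ‖y‖ →
      ‖A x - A y‖ ≤ C * ((‖x‖ ^ (n + 2))⁻¹ + (‖y‖ ^ (n + 2))⁻¹) * ‖x - y‖ := by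
    intro x y hx hy hxy
    have hxpos : 0 < ‖x‖ := norm_pos_iff.2 hx
    have hypos : 0 < ‖y‖ := norm_pos_iff.2 hy
    rcases le_or_gt ‖x‖ (2 * ‖x - y‖) with hcase | hcase
    · -- far apart: use the size bounds directly
      have hy3 : ‖y‖ ≤ 3 * ‖x - y‖ := by
        have h1 : ‖y‖ - ‖x‖ ≤ ‖y - x‖ := norm_sub_norm_le y x
        have h2 : ‖y - x‖ = ‖x - y‖ := norm_sub_rev y x
        linarith
      have hinvx : (‖x‖ ^ (n + 1))⁻¹ = (‖x‖ ^ (n + 2))⁻¹ * ‖x‖ := by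
        rw [pow_succ, mul_inv]
        field_simp
        ring
      have hinvy : (‖y‖ ^ (n + 1))⁻¹ = (‖y‖ ^ (n + 2))⁻¹ * ‖y‖ := by
        rw [pow_succ, mul_inv]
        field_simp
        ring
      have bx : ‖A x‖ ≤ 2 * M * ((‖x‖ ^ (n + 2))⁻¹ * ‖x - y‖) := by
        calc ‖A x‖ ≤ M * (‖x‖ ^ (n + 1))⁻¹ := hMb x hx
          _ = M * ((‖x‖ ^ (n + 2))⁻¹ * ‖x‖) := by rw [hinvx]
          _ ≤ M * ((‖x‖ ^ (n + 2))⁻¹ * (2 * ‖x - y‖)) := by gcongr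
          _ = 2 * M * ((‖x‖ ^ (n + 2))⁻¹ * ‖x - y‖) := by ring
      have by' : ‖A y‖ ≤ 3 * M * ((‖y‖ ^ (n + 2))⁻¹ * ‖x - y‖) := by
        calc ‖A y‖ ≤ M * (‖y‖ ^ (n + 1))⁻¹ := hMb y hy
          _ = M * ((‖y‖ ^ (n + 2))⁻¹ * ‖y‖) := by rw [hinvy]
          _ ≤ M * ((‖y‖ ^ (n + 2))⁻¹ * (3 * ‖x - y‖)) := by gcongr
          _ = 3 * M * ((‖y‖ ^ (n + 2))⁻¹ * ‖x - y‖) := by ring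
      have htri : ‖A x - A y‖ ≤ ‖A x‖ + ‖A y‖ := norm_sub_le _ _
      have hnn1 : 0 ≤ (‖x‖ ^ (n + 2))⁻¹ * ‖x - y‖ := by positivity
      have hnn2 : 0 ≤ (‖y‖ ^ (n + 2))⁻¹ * ‖x - y‖ := by positivity
      have hM'nn : 0 ≤ 2 ^ (n + 2) * M' := by positivity
      calc ‖A x - A y‖ ≤ 2 * M * ((‖x‖ ^ (n + 2))⁻¹ * ‖x - y‖) +
            3 * M * ((‖y‖ ^ (n + 2))⁻¹ * ‖x - y‖) := by linarith
        _ ≤ C * ((‖x‖ ^ (n + 2))⁻¹ * ‖x - y‖) + C * ((‖y‖ ^ (n + 2))⁻¹ * ‖x - y‖) := by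
            have hc1 : 2 * M ≤ C := by rw [hC]; nlinarith
            have hc2 : 3 * M ≤ C := by rw [hC]; nlinarith
            gcongr
        _ = C * ((‖x‖ ^ (n + 2))⁻¹ + (‖y‖ ^ (n + 2))⁻¹) * ‖x - y‖ := by ring
    · -- close together: mean value inequality on the segment
      have hseg : ∀ z ∈ segment ℝ x y, ‖x‖ / 2 ≤ ‖z‖ := by
        intro z hz
        have hzball : z ∈ Metric.closedBall x ‖x - y‖ := by
          refine (convex_closedBall x ‖x - y‖).segment_subset
            (Metric.mem_closedBall_self (by positivity)) ?_ hz
          rw [Metric.mem_closedBall, dist_eq_norm, norm_sub_rev]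
        rw [Metric.mem_closedBall, dist_eq_norm] at hzball
        have h1 : ‖x‖ - ‖z‖ ≤ ‖x - z‖ := norm_sub_norm_le x z
        have h2 : ‖x - z‖ = ‖z - x‖ := norm_sub_rev x z
        linarith
      have hbound : ∀ z ∈ segment ℝ x y,
          ‖fderiv ℝ A z‖ ≤ 2 ^ (n + 2) * M' * (‖x‖ ^ (n + 2))⁻¹ := by
        intro z hz
        have hz2 := hseg z hz
        have hz0 : z ≠ 0 := by
          intro h
          rw [h, norm_zero] at hz2
          linarith
        rw [hA, norm_fderiv_iteratedFDeriv]
        calc ‖iteratedFDeriv ℝ (n + 1) oseenTensor z‖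
            ≤ M' * (‖z‖ ^ (n + 2))⁻¹ := hM'b z hz0
          _ ≤ M' * ((‖x‖ / 2) ^ (n + 2))⁻¹ := by
              gcongr
              all_goals first | positivity | exact hz2
          _ = 2 ^ (n + 2) * M' * (‖x‖ ^ (n + 2))⁻¹ := by
              rw [div_pow, inv_div]
              ring
      have hdiff : ∀ z ∈ segment ℝ x y, DifferentiableAt ℝ A z := by
        intro z hz
        have hz2 := hseg z hz
        have hz0 : z ≠ 0 := by
          intro h
          rw [h, norm_zero] at hz2
          linarith
        exact oseen_diffAt n hz0
      have mvt := (convex_segment x y).norm_image_sub_le_of_norm_fderiv_le hdiff hbound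
        (right_mem_segment ℝ x y) (left_mem_segment ℝ x y)
      -- mvt : ‖A x - A y‖ ≤ ... * ‖x - y‖
      calc ‖A x - A y‖ ≤ 2 ^ (n + 2) * M' * (‖x‖ ^ (n + 2))⁻¹ * ‖x - y‖ := mvt
        _ ≤ C * ((‖x‖ ^ (n + 2))⁻¹ + (‖y‖ ^ (n + 2))⁻¹) * ‖x - y‖ := by
            have h1 : 2 ^ (n + 2) * M' ≤ C := by rw [hC]; nlinarith
            have h2 : (‖x‖ ^ (n + 2))⁻¹ ≤ (‖x‖ ^ (n + 2))⁻¹ + (‖y‖ ^ (n + 2))⁻¹ := by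
              have : (0:ℝ) ≤ (‖y‖ ^ (n + 2))⁻¹ := by positivity
              linarith
            gcongr
  have hexp : 2 + n = n + 2 := by ring
  intro x y hx hy
  rw [hexp]
  rcases le_total ‖x‖ ‖y‖ with h | h
  · exact key x y hx hy h
  · have hk := key y x hy hx h
    rw [norm_sub_rev (A y) (A x), norm_sub_rev y x] at hk
    calc ‖A x - A y‖ ≤ C * ((‖y‖ ^ (n + 2))⁻¹ + (‖x‖ ^ (n + 2))⁻¹) * ‖x - y‖ := hk
      _ = C * ((‖x‖ ^ (n + 2))⁻¹ + (‖y‖ ^ (n + 2))⁻¹) * ‖x - y‖ := by ring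

end
end

section
/- For every fixed vector e ∈ ℝ³, the vector field x ↦ Φ(x)·e is divergence free on ℝ³ ∖ {0}: for every nonzero x ∈ ℝ³, the sum over i = 1,2,3 of the i-th partial derivative at x of the i-th component of x ↦ Φ(x)·e equals zero. -/
noncomputable section

lemma hasFDerivAt_norm' (x : E3) (hx : x ≠ 0) :
    HasFDerivAt (fun y : E3 => ‖y‖) (‖x‖⁻¹ • innerSL ℝ x) x := by
  have hn : ‖x‖ ≠ 0 := norm_ne_zero_iff.mpr hx
  have h2 : HasFDerivAt (fun y : E3 => ‖y‖ ^ 2) (2 • innerSL ℝ x) x :=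
    (hasStrictFDerivAt_norm_sq x).hasFDerivAt
  have hs : HasDerivAt Real.sqrt (1 / (2 * Real.sqrt (‖x‖ ^ 2))) (‖x‖ ^ 2) :=
    Real.hasDerivAt_sqrt (by positivity)
  have h := hs.comp_hasFDerivAt x h2
  have heq : (fun y : E3 => Real.sqrt (‖y‖ ^ 2)) = fun y : E3 => ‖y‖ := by
    funext y; rw [Real.sqrt_sq (norm_nonneg y)]
  simp only [Function.comp_def] at h
  rw [heq] at h
  refine h.congr_fderiv ?_
  rw [Real.sqrt_sq (norm_nonneg x)]
  ext v
  simp [smul_smul]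
  field_simp

/-- for every fixed `e ∈ ℝ³`, the vector field `x ↦ Φ(x)·e` is divergence free
on `ℝ³ \ {0}`: for every nonzero `x`, the sum over `i` of the `i`-th partial derivative at
`x` of the `i`-th component of `x ↦ Φ(x)·e` vanishes. -/
theorem oseenTensor_apply_divergence_free (e : E3) (x : E3) (hx : x ≠ 0) :
    ∑ i : Fin 3,
      fderiv ℝ (fun y : E3 => oseenTensor y e i) x (EuclideanSpace.single i 1) = 0 := by
  have hn : ‖x‖ ≠ 0 := norm_ne_zero_iff.mpr hx
  have hnorm := hasFDerivAt_norm' x hx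
  have hinv : HasFDerivAt (fun y : E3 => ‖y‖⁻¹)
      ((-(‖x‖ ^ 2)⁻¹) • (‖x‖⁻¹ • innerSL ℝ x)) x :=
    (hasDerivAt_inv hn).comp_hasFDerivAt x hnorm
  have hpow : HasFDerivAt (fun y : E3 => (‖y‖ ^ 3)⁻¹)
      ((-(3 * ‖x‖ ^ 2) / (‖x‖ ^ 3) ^ 2) • (‖x‖⁻¹ • innerSL ℝ x)) x := by
    have := ((hasDerivAt_pow 3 ‖x‖).inv (pow_ne_zero 3 hn)).comp_hasFDerivAt x hnorm
    simp at this
    exact this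
  have hinner : HasFDerivAt (fun y : E3 => (inner ℝ y e : ℝ)) (innerSL ℝ e) x := by
    have h := (innerSL ℝ e).hasFDerivAt (x := x)
    refine h.congr_of_eventuallyEq (Filter.Eventually.of_forall fun y => ?_)
    simp [PiLp.inner_apply, RCLike.inner_apply, mul_comm]
  have hproj : ∀ i : Fin 3, HasFDerivAt (fun y : E3 => y i)
      (EuclideanSpace.proj (𝕜 := ℝ) i) x := by
    intro i
    have h : (fun y : E3 => y i) = ⇑(EuclideanSpace.proj (𝕜 := ℝ) i) := by
      funext y; simp
    rw [h]; exact (EuclideanSpace.proj (𝕜 := ℝ) i).hasFDerivAt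
  have hF : ∀ i : Fin 3, HasFDerivAt (fun y : E3 => oseenTensor y e i)
      ((8 * Real.pi)⁻¹ •
        ((e i) • ((-(‖x‖ ^ 2)⁻¹) • (‖x‖⁻¹ • innerSL ℝ x)) +
         ((‖x‖ ^ 3)⁻¹ • ((inner ℝ x e : ℝ) • (EuclideanSpace.proj (𝕜 := ℝ) i) +
            (x i) • (innerSL ℝ e : E3 →L[ℝ] ℝ)) +
          ((inner ℝ x e : ℝ) * x i) • ((-(3 * ‖x‖ ^ 2) / (‖x‖ ^ 3) ^ 2) • (‖x‖⁻¹ • innerSL ℝ x))))) x := by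
    intro i
    have h1 : HasFDerivAt (fun y : E3 => ‖y‖⁻¹ * e i)
        ((e i) • ((-(‖x‖ ^ 2)⁻¹) • (‖x‖⁻¹ • innerSL ℝ x))) x := hinv.mul_const (e i)
    have h2 : HasFDerivAt (fun y : E3 => (inner ℝ y e : ℝ) * y i)
        ((inner ℝ x e : ℝ) • (EuclideanSpace.proj (𝕜 := ℝ) i) +
          (x i) • (innerSL ℝ e : E3 →L[ℝ] ℝ)) x := hinner.mul (hproj i)
    have h3 : HasFDerivAt (fun y : E3 => (‖y‖ ^ 3)⁻¹ * ((inner ℝ y e : ℝ) * y i))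
        ((‖x‖ ^ 3)⁻¹ • ((inner ℝ x e : ℝ) • (EuclideanSpace.proj (𝕜 := ℝ) i) +
            (x i) • (innerSL ℝ e : E3 →L[ℝ] ℝ)) +
          ((inner ℝ x e : ℝ) * x i) • ((-(3 * ‖x‖ ^ 2) / (‖x‖ ^ 3) ^ 2) • (‖x‖⁻¹ • innerSL ℝ x))) x :=
      hpow.mul h2
    have h4 := (h1.add h3).const_mul ((8 * Real.pi)⁻¹)
    have heq : (fun y : E3 => oseenTensor y e i)
        = fun y : E3 => (8 * Real.pi)⁻¹ * (‖y‖⁻¹ * e i + (‖y‖ ^ 3)⁻¹ * ((inner ℝ y e : ℝ) * y i)) := by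
      funext y
      simp only [oseenTensor, ContinuousLinearMap.smul_apply, ContinuousLinearMap.add_apply,
        ContinuousLinearMap.smulRight_apply, ContinuousLinearMap.id_apply, PiLp.smul_apply,
        PiLp.add_apply, smul_eq_mul, innerSL_apply_apply]
    rw [heq]
    exact h4
  have hfd : ∀ i : Fin 3,
      fderiv ℝ (fun y : E3 => oseenTensor y e i) x (EuclideanSpace.single i 1)
        = (8 * Real.pi)⁻¹ *
          ((e i) * ((-(‖x‖ ^ 2)⁻¹) * (‖x‖⁻¹ * (x i))) +
           ((‖x‖ ^ 3)⁻¹ * ((inner ℝ x e : ℝ) * 1 + (x i) * (e i)) +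
            ((inner ℝ x e : ℝ) * x i) * ((-(3 * ‖x‖ ^ 2) / (‖x‖ ^ 3) ^ 2) * (‖x‖⁻¹ * (x i))))) := by
    intro i
    rw [(hF i).fderiv]
    simp only [ContinuousLinearMap.smul_apply, ContinuousLinearMap.add_apply, smul_eq_mul,
      PiLp.proj_apply, EuclideanSpace.single_apply, innerSL_apply_apply,
      EuclideanSpace.inner_single_right, RCLike.conj_to_real, conj_trivial,
      eq_self_iff_true, if_true]
    ring
  rw [Finset.sum_congr rfl fun i _ => hfd i]
  have hxe : ∑ i : Fin 3, x i * e i = (inner ℝ x e : ℝ) := by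
    simp [PiLp.inner_apply, RCLike.inner_apply, mul_comm]
  have hxx : ∑ i : Fin 3, x i * x i = ‖x‖ ^ 2 := by
    rw [EuclideanSpace.norm_eq, Real.sq_sqrt (by positivity)]
    simp [sq]
  have key : ∀ i : Fin 3,
      (8 * Real.pi)⁻¹ *
          ((e i) * ((-(‖x‖ ^ 2)⁻¹) * (‖x‖⁻¹ * (x i))) +
           ((‖x‖ ^ 3)⁻¹ * ((inner ℝ x e : ℝ) * 1 + (x i) * (e i)) +
            ((inner ℝ x e : ℝ) * x i) * ((-(3 * ‖x‖ ^ 2) / (‖x‖ ^ 3) ^ 2) * (‖x‖⁻¹ * (x i)))))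
      = ((8 * Real.pi)⁻¹ * (-(‖x‖ ^ 2)⁻¹ * ‖x‖⁻¹ + (‖x‖ ^ 3)⁻¹)) * (x i * e i)
        + ((8 * Real.pi)⁻¹ * ((inner ℝ x e : ℝ) * (-(3 * ‖x‖ ^ 2) / (‖x‖ ^ 3) ^ 2) * ‖x‖⁻¹)) * (x i * x i)
        + (8 * Real.pi)⁻¹ * (‖x‖ ^ 3)⁻¹ * (inner ℝ x e : ℝ) := by
    intro i; ring
  rw [Finset.sum_congr rfl fun i _ => key i]
  rw [Finset.sum_add_distrib, Finset.sum_add_distrib, ← Finset.mul_sum, ← Finset.mul_sum,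
    hxe, hxx]
  simp only [Finset.sum_const, Finset.card_univ, Fintype.card_fin, nsmul_eq_mul]
  field_simp
  ring

end
end

section
/- The pair (Φ, P) solves the homogeneous steady Stokes equations away from the origin: for every fixed vector e ∈ ℝ³ and every nonzero x ∈ ℝ³, the (componentwise) Laplacian at x of the vector field y ↦ Φ(y)·e equals the gradient at x of the scalar function y ↦ ⟨P(y), e⟩; that is, −Δ(Φ(·)e)(x) + ∇(P(·)·e)(x) = 0. -/
set_option maxHeartbeats 1000000
set_option synthInstance.maxHeartbeats 400000

noncomputable section

/-- The pressure associated to the Oseen tensor: `P(x) = x / (4π‖x‖³)`. -/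
def oseenPressure (x : E3) : E3 := (4 * Real.pi * ‖x‖ ^ 3)⁻¹ • x

lemma inner_right_hasFDerivAt (v x : E3) :
    HasFDerivAt (fun y : E3 => (inner ℝ y v : ℝ)) (innerSL ℝ v) x := by
  have h : (fun y : E3 => (inner ℝ y v : ℝ)) = fun y => innerSL ℝ v y := by
    funext y; exact real_inner_comm v y
  rw [h]; exact (innerSL ℝ v).hasFDerivAt

lemma norm_hasFDerivAt {x : E3} (hx : x ≠ 0) :
    HasFDerivAt (fun y : E3 => ‖y‖) (‖x‖⁻¹ • innerSL ℝ x) x := by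
  have hn : ‖x‖ ≠ 0 := norm_ne_zero_iff.mpr hx
  have h1 : HasFDerivAt (fun y : E3 => ‖y‖ ^ 2) (2 • innerSL ℝ x) x :=
    (hasStrictFDerivAt_norm_sq x).hasFDerivAt
  have h2 := (Real.hasDerivAt_sqrt (pow_ne_zero 2 hn)).comp_hasFDerivAt x h1
  have h3 : ((fun t => Real.sqrt t) ∘ fun y : E3 => ‖y‖ ^ 2) = fun y : E3 => ‖y‖ := by
    funext y; simp [Function.comp, Real.sqrt_sq (norm_nonneg y)]
  rw [h3] at h2
  refine h2.congr_fderiv ?_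
  ext w
  rw [Real.sqrt_sq (norm_nonneg x)]
  simp only [ContinuousLinearMap.coe_smul', Pi.smul_apply, smul_eq_mul]
  field_simp
  ring

lemma pow_inv_hasFDerivAt (k : ℕ) {x : E3} (hx : x ≠ 0) :
    HasFDerivAt (fun y : E3 => (‖y‖ ^ (k+1))⁻¹)
      ((-(k+1 : ℝ) * (‖x‖ ^ (k+3))⁻¹) • innerSL ℝ x) x := by
  have hn : ‖x‖ ≠ 0 := norm_ne_zero_iff.mpr hx
  have hd : HasDerivAt (fun t : ℝ => (t ^ (k+1))⁻¹)
      (-((k+1 : ℝ) * ‖x‖ ^ k) / (‖x‖ ^ (k+1)) ^ 2) ‖x‖ := by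
    have := (hasDerivAt_pow (k+1) ‖x‖).inv (pow_ne_zero _ hn)
    simp at this
    exact this
  have h := hd.comp_hasFDerivAt x (norm_hasFDerivAt hx)
  refine h.congr_fderiv ?_
  rw [smul_smul]
  congr 1
  field_simp
  ring

def D1 (e x : E3) : E3 →L[ℝ] E3 :=
  (8 * Real.pi)⁻¹ • (
    ((-(‖x‖^3)⁻¹) • (innerSL ℝ x).smulRight e)
    + ((-3 * (‖x‖^5)⁻¹ * inner ℝ x e) • (innerSL ℝ x).smulRight x)
    + ((‖x‖^3)⁻¹ • (innerSL ℝ e).smulRight x)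
    + (((‖x‖^3)⁻¹ * inner ℝ x e) • ContinuousLinearMap.id ℝ E3))

lemma hasFDerivAt_oseen {x : E3} (e : E3) (hx : x ≠ 0) :
    HasFDerivAt (fun y => oseenTensor y e) (D1 e x) x := by
  have hfun : (fun y => oseenTensor y e)
      = fun y : E3 => (8 * Real.pi)⁻¹ • ((‖y‖ ^ 1)⁻¹ • e + ((‖y‖ ^ 3)⁻¹ * inner ℝ y e) • y) := by
    funext y
    simp [oseenTensor, mul_smul, pow_one]
  rw [hfun]
  have h := (((pow_inv_hasFDerivAt 0 hx).smul_const e).add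
      (((pow_inv_hasFDerivAt 2 hx).mul (inner_right_hasFDerivAt e x)).smul
        (hasFDerivAt_id x))).const_smul ((8 * Real.pi)⁻¹)
  refine h.congr_fderiv ?_
  refine ContinuousLinearMap.ext fun v => ?_
  simp only [D1, ContinuousLinearMap.add_apply, ContinuousLinearMap.coe_smul', Pi.smul_apply,
    ContinuousLinearMap.smulRight_apply, ContinuousLinearMap.id_apply, innerSL_apply_apply, id,
    Nat.cast_ofNat, Nat.cast_zero]
  norm_num
  module


lemma D1_apply (e x v : E3) : D1 e x v
    = (8 * Real.pi)⁻¹ • (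
        (-((‖x‖^3)⁻¹ * inner ℝ x v)) • e
      + (-3 * (‖x‖^5)⁻¹ * inner ℝ x e * inner ℝ x v + (‖x‖^3)⁻¹ * inner ℝ e v) • x
      + ((‖x‖^3)⁻¹ * inner ℝ x e) • v) := by
  simp only [D1, ContinuousLinearMap.add_apply, ContinuousLinearMap.coe_smul', Pi.smul_apply,
    ContinuousLinearMap.smulRight_apply, ContinuousLinearMap.id_apply, innerSL_apply_apply]
  module

lemma second_deriv (e v : E3) {x : E3} (hx : x ≠ 0) :
    fderiv ℝ (fun y => D1 e y v) x v
    = (8 * Real.pi)⁻¹ • (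
        (3 * (‖x‖^5)⁻¹ * inner ℝ x v * inner ℝ x v - (‖x‖^3)⁻¹ * inner ℝ v v) • e
      + (15 * (‖x‖^7)⁻¹ * inner ℝ x v * inner ℝ x v * inner ℝ x e
          - 3 * (‖x‖^5)⁻¹ * inner ℝ v v * inner ℝ x e
          - 6 * (‖x‖^5)⁻¹ * inner ℝ x v * inner ℝ e v) • x
      + (-6 * (‖x‖^5)⁻¹ * inner ℝ x v * inner ℝ x e + 2 * (‖x‖^3)⁻¹ * inner ℝ e v) • v) := by
  have hfun : (fun y => D1 e y v)
      = fun y : E3 => (8 * Real.pi)⁻¹ • (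
        (-((‖y‖^3)⁻¹ * inner ℝ y v)) • e
      + (-3 * (‖y‖^5)⁻¹ * inner ℝ y e * inner ℝ y v + (‖y‖^3)⁻¹ * inner ℝ e v) • y
      + ((‖y‖^3)⁻¹ * inner ℝ y e) • v) := funext fun y => D1_apply e y v
  rw [hfun]
  have h2 := pow_inv_hasFDerivAt 2 hx
  have h4 := pow_inv_hasFDerivAt 4 hx
  have hxv := inner_right_hasFDerivAt v x
  have hxe := inner_right_hasFDerivAt e x
  have hA : HasFDerivAt (fun y : E3 => -((‖y‖^3)⁻¹ * inner ℝ y v)) _ x := (h2.mul hxv).neg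
  have hB : HasFDerivAt
      (fun y : E3 => -3 * (‖y‖^5)⁻¹ * inner ℝ y e * inner ℝ y v + (‖y‖^3)⁻¹ * inner ℝ e v) _ x :=
    (((h4.const_mul (-3)).mul hxe).mul hxv).add (h2.mul_const (inner ℝ e v))
  have hT : HasFDerivAt (fun y : E3 => (‖y‖^3)⁻¹ * inner ℝ y e) _ x := h2.mul hxe
  have h := (((hA.smul_const e).add (hB.smul (hasFDerivAt_id x))).add
      (hT.smul_const v)).const_smul ((8 * Real.pi)⁻¹)
  have h' : HasFDerivAt (fun y : E3 => (8 * Real.pi)⁻¹ • (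
        (-((‖y‖^3)⁻¹ * inner ℝ y v)) • e
      + (-3 * (‖y‖^5)⁻¹ * inner ℝ y e * inner ℝ y v + (‖y‖^3)⁻¹ * inner ℝ e v) • y
      + ((‖y‖^3)⁻¹ * inner ℝ y e) • v)) _ x :=
    h.congr_of_eventuallyEq (Filter.Eventually.of_forall fun y => rfl)
  rw [h'.fderiv]
  simp only [ContinuousLinearMap.add_apply, ContinuousLinearMap.coe_smul', Pi.smul_apply,
    ContinuousLinearMap.smulRight_apply, ContinuousLinearMap.id_apply, innerSL_apply_apply,
    ContinuousLinearMap.neg_apply, ContinuousLinearMap.coe_mul, smul_eq_mul, id,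
    Nat.cast_ofNat, Nat.cast_zero]
  norm_num
  match_scalars <;> ring

lemma gradient_pressure (e : E3) {x : E3} (hx : x ≠ 0) :
    gradient (fun y : E3 => (inner ℝ (oseenPressure y) e : ℝ)) x
    = (4 * Real.pi)⁻¹ • ((‖x‖^3)⁻¹ • e + (-3 * (‖x‖^5)⁻¹ * inner ℝ x e) • x) := by
  have hfun : (fun y : E3 => (inner ℝ (oseenPressure y) e : ℝ))
      = fun y : E3 => (4 * Real.pi)⁻¹ * ((‖y‖^3)⁻¹ * inner ℝ y e) := by
    funext y
    simp only [oseenPressure, real_inner_smul_left, mul_inv]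
    ring
  rw [hfun]
  have h := ((pow_inv_hasFDerivAt 2 hx).mul (inner_right_hasFDerivAt e x)).const_mul
    ((4 * Real.pi)⁻¹)
  refine HasGradientAt.gradient ?_
  rw [hasGradientAt_iff_hasFDerivAt]
  refine h.congr_fderiv ?_
  refine ContinuousLinearMap.ext fun w => ?_
  rw [InnerProductSpace.toDual_apply_apply]
  simp only [ContinuousLinearMap.add_apply, ContinuousLinearMap.coe_smul', Pi.smul_apply,
    innerSL_apply_apply, smul_eq_mul, inner_add_left, real_inner_smul_left,
    Nat.cast_ofNat, Nat.cast_zero]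
  push_cast
  ring
/-- `(Φ, P)` solves the homogeneous steady Stokes equations away from the
origin: for every `e ∈ ℝ³` and every nonzero `x`,
`−Δ(Φ(·)e)(x) + ∇(P(·)·e)(x) = 0`, where the (componentwise) Laplacian is the sum of the
second partial derivatives and `∇` is the gradient of the scalar map `y ↦ ⟪P(y), e⟫`. -/
theorem oseenTensor_pressure_stokes (e : E3) (x : E3) (hx : x ≠ 0) :
    -(∑ i : Fin 3,
        fderiv ℝ (fun y : E3 =>
            fderiv ℝ (fun z : E3 => oseenTensor z e) y (EuclideanSpace.single i 1))
          x (EuclideanSpace.single i 1))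
      + gradient (fun y : E3 => (inner ℝ (oseenPressure y) e : ℝ)) x = 0 := by
  have hnx : ‖x‖ ≠ 0 := norm_ne_zero_iff.mpr hx
  have hev : ∀ v : E3, (fun y : E3 => fderiv ℝ (fun z : E3 => oseenTensor z e) y v)
      =ᶠ[nhds x] fun y => D1 e y v := by
    intro v
    filter_upwards [eventually_ne_nhds hx] with y hy
    rw [(hasFDerivAt_oseen e hy).fderiv]
  have hsingle : ∀ i : Fin 3, (inner ℝ x (EuclideanSpace.single i 1) : ℝ) = x i := by
    intro i; simp [EuclideanSpace.inner_single_right]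
  have hsingle' : ∀ i : Fin 3, (inner ℝ e (EuclideanSpace.single i 1) : ℝ) = e i := by
    intro i; simp [EuclideanSpace.inner_single_right]
  have hsingle2 : ∀ i : Fin 3,
      (inner ℝ (EuclideanSpace.single i 1 : E3) (EuclideanSpace.single i 1) : ℝ) = 1 := by
    intro i; simp [EuclideanSpace.inner_single_right, EuclideanSpace.single_apply]
  have hsum : (∑ i : Fin 3,
        fderiv ℝ (fun y : E3 =>
            fderiv ℝ (fun z : E3 => oseenTensor z e) y (EuclideanSpace.single i 1))
          x (EuclideanSpace.single i 1))
      = ∑ i : Fin 3, (8 * Real.pi)⁻¹ • (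
        (3 * (‖x‖^5)⁻¹ * (x i) * (x i) - (‖x‖^3)⁻¹ * 1) • e
      + (15 * (‖x‖^7)⁻¹ * (x i) * (x i) * inner ℝ x e
          - 3 * (‖x‖^5)⁻¹ * 1 * inner ℝ x e
          - 6 * (‖x‖^5)⁻¹ * (x i) * (e i)) • x
      + (-6 * (‖x‖^5)⁻¹ * (x i) * inner ℝ x e + 2 * (‖x‖^3)⁻¹ * (e i))
          • (EuclideanSpace.single i 1 : E3)) := by
    refine Finset.sum_congr rfl fun i _ => ?_
    rw [Filter.EventuallyEq.fderiv_eq (hev _), second_deriv e _ hx,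
      hsingle i, hsingle' i, hsingle2 i]
  rw [hsum, gradient_pressure e hx, Fin.sum_univ_three]
  have hie : (inner ℝ x e : ℝ) = x 0 * e 0 + x 1 * e 1 + x 2 * e 2 := by
    simp [PiLp.inner_apply, RCLike.inner_apply, Fin.sum_univ_three]
    ring
  have hr : (‖x‖^2)⁻¹ * (x 0 * x 0 + x 1 * x 1 + x 2 * x 2) = 1 := by
    have h2 : ‖x‖^2 = x 0 * x 0 + x 1 * x 1 + x 2 * x 2 := by
      rw [← real_inner_self_eq_norm_sq]
      simp only [PiLp.inner_apply, RCLike.inner_apply, Fin.sum_univ_three, conj_trivial]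
    rw [← h2]
    exact inv_mul_cancel₀ (pow_ne_zero 2 hnx)
  have h5 : (‖x‖^5)⁻¹ = (‖x‖^3)⁻¹ * (‖x‖^2)⁻¹ := by
    rw [show (5:ℕ) = 3 + 2 from rfl, pow_add, mul_inv]
  have h7 : (‖x‖^7)⁻¹ = (‖x‖^3)⁻¹ * ((‖x‖^2)⁻¹ * (‖x‖^2)⁻¹) := by
    rw [show (7:ℕ) = 3 + (2 + 2) from rfl, pow_add, pow_add, mul_inv, mul_inv]
  rw [hie, h5, h7]
  ext j
  simp only [PiLp.add_apply, PiLp.neg_apply, PiLp.smul_apply, smul_eq_mul,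
    EuclideanSpace.single_apply, PiLp.zero_apply]
  fin_cases j <;> norm_num [Fin.ext_iff] <;> beta_reduce <;>
    simp -failIfUnchanged only [Fin.zero_eta, Fin.mk_one, Fin.reduceFinMk] <;>
  [ linear_combination (-(3:ℝ) * (8*Real.pi)⁻¹ * (‖x‖^3)⁻¹ * e 0
      - 15 * (8*Real.pi)⁻¹ * (‖x‖^3)⁻¹ * (‖x‖^2)⁻¹ * (x 0*e 0 + x 1*e 1 + x 2*e 2) * x 0) * hr;
    linear_combination (-(3:ℝ) * (8*Real.pi)⁻¹ * (‖x‖^3)⁻¹ * e 1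
      - 15 * (8*Real.pi)⁻¹ * (‖x‖^3)⁻¹ * (‖x‖^2)⁻¹ * (x 0*e 0 + x 1*e 1 + x 2*e 2) * x 1) * hr;
    linear_combination (-(3:ℝ) * (8*Real.pi)⁻¹ * (‖x‖^3)⁻¹ * e 2
      - 15 * (8*Real.pi)⁻¹ * (‖x‖^3)⁻¹ * (‖x‖^2)⁻¹ * (x 0*e 0 + x 1*e 1 + x 2*e 2) * x 2) * hr]

end
end

section
/- Assume in addition that d_min ≤ 2W. Then there is a universal constant C > 0 such that for every x ∈ ℝ³: ‖∫_{ℝ³} (χ_{d_min}Φ)(x − T(y)) dμ(y)‖ ≤ C·(M·W³/d_min + M + 1), where the integral is the (matrix-valued) Lebesgue integral of y ↦ (χ_{d_min}Φ)(x − T(y)) against μ. -/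
open MeasureTheory
open scoped ENNReal NNReal

noncomputable section

/-- The truncated Oseen kernel `(χ_d Φ)(z) = χ(z/d) Φ(z)` (equal to `0` at `z = 0`,
since `χ` vanishes near the origin). -/
def truncOseen (χ : E3 → ℝ) (d : ℝ) (z : E3) : E3 →L[ℝ] E3 :=
  χ (d⁻¹ • z) • oseenTensor z

lemma norm_oseen_le (z : E3) : ‖oseenTensor z‖ ≤ (4 * Real.pi)⁻¹ * ‖z‖⁻¹ := by
  have hπ : (0:ℝ) < Real.pi := Real.pi_pos
  rw [oseenTensor]
  have h1 : ‖‖z‖⁻¹ • ContinuousLinearMap.id ℝ E3 + (‖z‖ ^ 3)⁻¹ • (innerSL ℝ z).smulRight z‖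
      ≤ 2 * ‖z‖⁻¹ := by
    refine (norm_add_le _ _).trans ?_
    have hid : ‖ContinuousLinearMap.id ℝ E3‖ ≤ 1 := ContinuousLinearMap.norm_id_le
    have hsr : ‖(innerSL ℝ z).smulRight z‖ = ‖z‖ ^ 2 := by
      rw [ContinuousLinearMap.norm_smulRight_apply, innerSL_apply_norm, sq]
    have hr : (0:ℝ) ≤ ‖z‖ := norm_nonneg z
    have e1 : ‖‖z‖⁻¹ • ContinuousLinearMap.id ℝ E3‖ ≤ ‖z‖⁻¹ := by
      rw [norm_smul ‖z‖⁻¹ (ContinuousLinearMap.id ℝ E3)]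
      rw [Real.norm_eq_abs, abs_of_nonneg (by positivity)]
      nlinarith [inv_nonneg.mpr hr]
    have e2 : ‖(‖z‖ ^ 3)⁻¹ • (innerSL ℝ z).smulRight z‖ ≤ ‖z‖⁻¹ := by
      rw [norm_smul (‖z‖ ^ 3)⁻¹ ((innerSL ℝ z).smulRight z),
        hsr, Real.norm_eq_abs, abs_of_nonneg (by positivity)]
      rcases eq_or_ne z 0 with rfl | hz
      · simp
      · have hz' : (0:ℝ) < ‖z‖ := norm_pos_iff.mpr hz
        have : (‖z‖ ^ 3)⁻¹ * ‖z‖ ^ 2 = ‖z‖⁻¹ := by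
          generalize ‖z‖ = r at hz' ⊢
          field_simp
        exact le_of_eq this
    linarith
  rw [norm_smul (8 * Real.pi)⁻¹
    (‖z‖⁻¹ • ContinuousLinearMap.id ℝ E3 + (‖z‖ ^ 3)⁻¹ • (innerSL ℝ z).smulRight z),
    Real.norm_eq_abs, abs_of_nonneg (by positivity : (0:ℝ) ≤ (8 * Real.pi)⁻¹)]
  refine (mul_le_mul_of_nonneg_left h1 (by positivity)).trans (le_of_eq ?_)
  generalize ‖z‖⁻¹ = r
  have h8 : (8 * Real.pi) ≠ 0 := by positivity
  have h4 : (4 * Real.pi) ≠ 0 := by positivity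
  field_simp
  ring

lemma norm_truncOseen_le (χ : E3 → ℝ) (hχ : ∀ z : E3, χ z ∈ Set.Icc (0 : ℝ) 1)
    (d : ℝ) (z : E3) : ‖truncOseen χ d z‖ ≤ (4 * Real.pi)⁻¹ * ‖z‖⁻¹ := by
  rw [truncOseen, norm_smul (χ (d⁻¹ • z)) (oseenTensor z)]
  have h := hχ (d⁻¹ • z)
  have h1 : ‖χ (d⁻¹ • z)‖ ≤ 1 := by
    rw [Real.norm_eq_abs, abs_of_nonneg h.1]; exact h.2
  calc ‖χ (d⁻¹ • z)‖ * ‖oseenTensor z‖ ≤ 1 * ((4 * Real.pi)⁻¹ * ‖z‖⁻¹) :=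
        mul_le_mul h1 (norm_oseen_le z) (norm_nonneg _) zero_le_one
    _ = (4 * Real.pi)⁻¹ * ‖z‖⁻¹ := one_mul _

lemma norm_truncOseen_le' (χ : E3 → ℝ) (hχ : ∀ z : E3, χ z ∈ Set.Icc (0 : ℝ) 1)
    (hχ0 : ∀ z : E3, ‖z‖ ≤ 1 / 4 → χ z = 0) {d : ℝ} (hd : 0 < d) (z : E3) :
    ‖truncOseen χ d z‖ ≤ (Real.pi * d)⁻¹ := by
  have hπ : (0:ℝ) < Real.pi := Real.pi_pos
  rcases le_or_gt ‖d⁻¹ • z‖ (1/4) with h | h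
  · rw [truncOseen, hχ0 _ h, norm_smul (0:ℝ) (oseenTensor z), norm_zero, zero_mul]
    positivity
  · have hz : d / 4 < ‖z‖ := by
      rw [norm_smul d⁻¹ z, Real.norm_eq_abs, abs_of_nonneg (by positivity : (0:ℝ) ≤ d⁻¹)] at h
      rw [div_lt_iff₀ (by norm_num : (0:ℝ) < 4)]
      nlinarith [mul_inv_cancel₀ hd.ne', norm_nonneg z]
    have hz0 : (0:ℝ) < ‖z‖ := lt_trans (by positivity) hz
    refine (norm_truncOseen_le χ hχ d z).trans ?_
    have : ‖z‖⁻¹ ≤ 4 / d := by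
      rw [inv_le_comm₀ hz0 (by positivity), inv_div]
      nlinarith
    calc (4 * Real.pi)⁻¹ * ‖z‖⁻¹ ≤ (4 * Real.pi)⁻¹ * (4 / d) :=
          mul_le_mul_of_nonneg_left this (by positivity)
      _ = (Real.pi * d)⁻¹ := by field_simp

lemma vol_ball3 (p : E3) (r : ℝ) :
    volume (Metric.ball p r) = (ENNReal.ofReal r) ^ 3 * ENNReal.ofReal (4 / 3 * Real.pi) := by
  have hπ : (0:ℝ) < Real.pi := Real.pi_pos
  have hs : (0:ℝ) < Real.sqrt Real.pi := Real.sqrt_pos.mpr hπ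
  rw [EuclideanSpace.volume_ball]
  rw [Fintype.card_fin]
  congr 1
  have hg : Real.Gamma ((3:ℕ) / 2 + 1) = 3 / 4 * Real.sqrt Real.pi := by
    rw [show (((3:ℕ):ℝ) / 2 + 1) = 1/2 + 1 + 1 by norm_num,
      Real.Gamma_add_one (by norm_num), Real.Gamma_add_one (by norm_num),
      Real.Gamma_one_half_eq]
    ring
  rw [hg, show Real.sqrt Real.pi ^ 3 = Real.pi * Real.sqrt Real.pi by
    rw [pow_succ, Real.sq_sqrt hπ.le]]
  congr 1
  field_simp

lemma lintegral_inv_ball (p : E3) :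
    ∫⁻ y in Metric.ball p 1, ENNReal.ofReal ‖p - y‖⁻¹ ∂volume
      ≤ ENNReal.ofReal (16 / 3 * Real.pi) := by
  have hπ : (0:ℝ) < Real.pi := Real.pi_pos
  set S : ℕ → Set E3 :=
    fun k => {y | (2:ℝ)⁻¹ ^ (k+1) ≤ ‖p - y‖ ∧ ‖p - y‖ < (2:ℝ)⁻¹ ^ k} with hS
  have hcover : Metric.ball p 1 ⊆ {p} ∪ ⋃ k, S k := by
    intro y hy
    rcases eq_or_ne y p with rfl | hyp
    · exact Or.inl rfl
    · refine Or.inr ?_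
      have hv0 : 0 < ‖p - y‖ := by
        rw [norm_pos_iff, sub_ne_zero]
        exact fun h => hyp h.symm
      have hv1 : ‖p - y‖ < 1 := by
        rw [Metric.mem_ball, dist_eq_norm, ← norm_sub_rev] at hy
        exact hy
      have hex : ∃ n : ℕ, (2:ℝ)⁻¹ ^ n ≤ ‖p - y‖ := by
        obtain ⟨n, hn⟩ := exists_pow_lt_of_lt_one hv0 (by norm_num : (2:ℝ)⁻¹ < 1)
        exact ⟨n, hn.le⟩
      classical
      set m := Nat.find hex with hm
      have hms : (2:ℝ)⁻¹ ^ m ≤ ‖p - y‖ := Nat.find_spec hex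
      have hm0 : m ≠ 0 := by
        intro h
        rw [h, pow_zero] at hms
        linarith
      have hlt : ‖p - y‖ < (2:ℝ)⁻¹ ^ (m - 1) := by
        by_contra hcon
        exact Nat.find_min hex (Nat.sub_lt (Nat.pos_of_ne_zero hm0) one_pos) (not_lt.mp hcon)
      refine Set.mem_iUnion.mpr ⟨m - 1, ?_, hlt⟩
      rwa [Nat.sub_add_cancel (Nat.one_le_iff_ne_zero.mpr hm0)]
  calc ∫⁻ y in Metric.ball p 1, ENNReal.ofReal ‖p - y‖⁻¹ ∂volume
      ≤ ∫⁻ y in {p} ∪ ⋃ k, S k, ENNReal.ofReal ‖p - y‖⁻¹ ∂volume :=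
        lintegral_mono_set hcover
    _ ≤ (∫⁻ y in {p}, ENNReal.ofReal ‖p - y‖⁻¹ ∂volume)
        + ∫⁻ y in ⋃ k, S k, ENNReal.ofReal ‖p - y‖⁻¹ ∂volume :=
        lintegral_union_le _ _ _
    _ ≤ 0 + ∑' k, ∫⁻ y in S k, ENNReal.ofReal ‖p - y‖⁻¹ ∂volume := by
        gcongr
        · exact le_of_eq (setLIntegral_measure_zero _ _ (measure_singleton p))
        · exact lintegral_iUnion_le _ _
    _ = ∑' k, ∫⁻ y in S k, ENNReal.ofReal ‖p - y‖⁻¹ ∂volume := by rw [zero_add]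
    _ ≤ ∑' k : ℕ, ENNReal.ofReal (8 / 3 * Real.pi) * (ENNReal.ofReal 4⁻¹) ^ k := by
        refine ENNReal.tsum_le_tsum fun k => ?_
        have hSm : MeasurableSet (S k) := by
          have hc : Continuous fun y : E3 => ‖p - y‖ := (continuous_const.sub continuous_id).norm
          exact hc.measurable measurableSet_Ico
        have hb : ∀ y ∈ S k, ENNReal.ofReal ‖p - y‖⁻¹ ≤ ENNReal.ofReal ((2:ℝ) ^ (k+1)) := by
          intro y hy
          refine ENNReal.ofReal_le_ofReal ?_
          have h1 : (0:ℝ) < (2:ℝ)⁻¹ ^ (k+1) := by positivity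
          have := inv_anti₀ h1 hy.1
          rwa [← inv_pow, inv_inv] at this
        calc ∫⁻ y in S k, ENNReal.ofReal ‖p - y‖⁻¹ ∂volume
            ≤ ∫⁻ _ in S k, ENNReal.ofReal ((2:ℝ) ^ (k+1)) ∂volume := setLIntegral_mono' hSm hb
          _ = ENNReal.ofReal ((2:ℝ) ^ (k+1)) * volume (S k) := by
              rw [MeasureTheory.setLIntegral_const]
          _ ≤ ENNReal.ofReal ((2:ℝ) ^ (k+1)) * volume (Metric.ball p ((2:ℝ)⁻¹ ^ k)) := by
              refine mul_le_mul_right (measure_mono fun y hy => ?_) _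
              rw [Metric.mem_ball, dist_eq_norm, ← norm_sub_rev]
              exact hy.2
          _ = ENNReal.ofReal (8 / 3 * Real.pi) * (ENNReal.ofReal 4⁻¹) ^ k := by
              rw [vol_ball3, ← ENNReal.ofReal_pow (by positivity),
                ← ENNReal.ofReal_mul (by positivity), ← ENNReal.ofReal_mul (by positivity),
                ← ENNReal.ofReal_pow (by norm_num),
                ← ENNReal.ofReal_mul (by positivity)]
              congr 1
              have ha : (0:ℝ) < (2:ℝ) ^ k := by positivity
              rw [show ((2:ℝ)⁻¹) ^ k = ((2:ℝ) ^ k)⁻¹ from inv_pow 2 k,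
                show ((4:ℝ)⁻¹) ^ k = (((2:ℝ) ^ k) ^ 2)⁻¹ by
                  rw [inv_pow, ← pow_mul, mul_comm k 2, show (4:ℝ) = 2 ^ 2 by norm_num,
                    ← pow_mul]]
              field_simp
              ring
    _ = ENNReal.ofReal (8 / 3 * Real.pi) * ∑' k : ℕ, (ENNReal.ofReal 4⁻¹) ^ k :=
        ENNReal.tsum_mul_left
    _ ≤ ENNReal.ofReal (8 / 3 * Real.pi) * ∑' k : ℕ, ((2:ℝ≥0∞)⁻¹) ^ k := by
        have h14 : ENNReal.ofReal 4⁻¹ ≤ (2:ℝ≥0∞)⁻¹ := by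
          rw [show ((2:ℝ≥0∞))⁻¹ = ENNReal.ofReal 2⁻¹ by
            rw [ENNReal.ofReal_inv_of_pos (by norm_num), ENNReal.ofReal_ofNat]]
          exact ENNReal.ofReal_le_ofReal (by norm_num)
        exact mul_le_mul_right (ENNReal.tsum_le_tsum fun k =>
          pow_le_pow_left₀ (zero_le) h14 k) _
    _ = ENNReal.ofReal (8 / 3 * Real.pi) * 2 := by
        rw [ENNReal.tsum_geometric, ENNReal.one_sub_inv_two, inv_inv]
    _ = ENNReal.ofReal (16 / 3 * Real.pi) := by
        rw [show (2:ℝ≥0∞) = ENNReal.ofReal 2 from (ENNReal.ofReal_ofNat 2).symm,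
          ← ENNReal.ofReal_mul (by positivity)]
        congr 1
        ring

/-- there is a universal constant `C > 0` such that, in the transport setting
(probability measure `μ` with density bounded by `M`, a.e. displacement at most `W`,
pushforward equal to the empirical measure of points with positive minimal distance
`d_min ≤ 2W`), for every `x ∈ ℝ³`,
`‖∫ (χ_{d_min}Φ)(x − T(y)) dμ(y)‖ ≤ C (M W³/d_min + M + 1)`. -/
theorem truncated_convolution_bound :
    ∃ C : ℝ, 0 < C ∧
      ∀ (χ : E3 → ℝ),
        (∀ z : E3, χ z ∈ Set.Icc (0 : ℝ) 1) →
        (∀ z : E3, ‖z‖ ≤ 1 / 4 → χ z = 0) →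
        (∀ z : E3, 1 / 2 ≤ ‖z‖ → χ z = 1) →
      ∀ (N : ℕ) (M W : ℝ) (μ : Measure E3) (T : E3 → E3) (x : Fin N → E3) (dmin : ℝ),
        2 ≤ N → 0 < M → 0 < W →
        IsProbabilityMeasure μ →
        (∀ A : Set E3, μ A ≤ ENNReal.ofReal M * volume A) →
        Measurable T →
        (∀ᵐ y ∂μ, ‖T y - y‖ ≤ W) →
        μ.map T = (N : ℝ≥0∞)⁻¹ • ∑ j : Fin N, Measure.dirac (x j) →
        dmin = sInf {d : ℝ | ∃ i j : Fin N, i ≠ j ∧ d = ‖x i - x j‖} →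
        0 < dmin → dmin ≤ 2 * W →
        ∀ p : E3,
          ‖∫ y, truncOseen χ dmin (p - T y) ∂μ‖ ≤ C * (M * W ^ 3 / dmin + M + 1) := by
  refine ⟨11, by norm_num, ?_⟩
  intro χ hχ hχ0 hχ1 N M W μ T x dmin hN hM hW hprob hdens hT hdisp hpush hdinf hd hdW p
  have hπ : (0:ℝ) < Real.pi := Real.pi_pos
  set f : E3 → E3 →L[ℝ] E3 := fun y => truncOseen χ dmin (p - T y) with hf
  have hRHS0 : (0:ℝ) ≤ M * W ^ 3 / dmin + M + 1 := by positivity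
  -- the main lintegral bound
  have key : ∫⁻ y, ENNReal.ofReal ‖f y‖ ∂μ
      ≤ ENNReal.ofReal (11 * (M * W ^ 3 / dmin + M + 1)) := by
    set A : Set E3 := Metric.ball p (2 * W) with hA
    set B : Set E3 := Metric.ball p 1 with hB
    have hAm : MeasurableSet A := measurableSet_ball
    have hBm : MeasurableSet B := measurableSet_ball
    set g : E3 → ℝ≥0∞ := fun y => ENNReal.ofReal ((2 * Real.pi)⁻¹ * ‖p - y‖⁻¹) with hg
    -- near-field part
    have part1 : ∫⁻ y in A, ENNReal.ofReal ‖f y‖ ∂μ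
        ≤ ENNReal.ofReal (32 / 3 * (M * W ^ 3 / dmin)) := by
      calc ∫⁻ y in A, ENNReal.ofReal ‖f y‖ ∂μ
          ≤ ∫⁻ _ in A, ENNReal.ofReal ((Real.pi * dmin)⁻¹) ∂μ :=
            lintegral_mono fun y => ENNReal.ofReal_le_ofReal
              (norm_truncOseen_le' χ hχ hχ0 hd _)
        _ = ENNReal.ofReal ((Real.pi * dmin)⁻¹) * μ A := by
            rw [MeasureTheory.setLIntegral_const]
        _ ≤ ENNReal.ofReal ((Real.pi * dmin)⁻¹) * (ENNReal.ofReal M * volume A) :=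
            mul_le_mul_right (hdens A) _
        _ = ENNReal.ofReal ((Real.pi * dmin)⁻¹ * (M * ((2 * W) ^ 3 * (4 / 3 * Real.pi)))) := by
            rw [hA, vol_ball3, ← ENNReal.ofReal_pow (by positivity),
              ← ENNReal.ofReal_mul (by positivity), ← ENNReal.ofReal_mul (by positivity),
              ← ENNReal.ofReal_mul (by positivity)]
        _ = ENNReal.ofReal (32 / 3 * (M * W ^ 3 / dmin)) := by
            congr 1
            field_simp
            ring
    -- far-field pointwise bound
    have part2 : ∫⁻ y in Aᶜ, ENNReal.ofReal ‖f y‖ ∂μ ≤ ∫⁻ y in Aᶜ, g y ∂μ := by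
      refine lintegral_mono_ae ?_
      filter_upwards [ae_restrict_of_ae hdisp, ae_restrict_mem hAm.compl] with y hy1 hy2
      have hpy : 2 * W ≤ ‖p - y‖ := by
        rw [norm_sub_rev]
        simpa [hA, Metric.mem_ball, dist_eq_norm, sub_eq_iff_eq_add] using hy2
      have hpos : (0:ℝ) < ‖p - y‖ := lt_of_lt_of_le (by positivity) hpy
      have hTy : ‖p - y‖ / 2 ≤ ‖p - T y‖ := by
        have h3 : ‖p - y‖ ≤ ‖p - T y‖ + ‖T y - y‖ := by
          calc ‖p - y‖ = ‖(p - T y) + (T y - y)‖ := by abel_nf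
            _ ≤ ‖p - T y‖ + ‖T y - y‖ := norm_add_le _ _
        linarith
      refine ENNReal.ofReal_le_ofReal ?_
      calc ‖f y‖ ≤ (4 * Real.pi)⁻¹ * ‖p - T y‖⁻¹ := norm_truncOseen_le χ hχ dmin _
        _ ≤ (4 * Real.pi)⁻¹ * (2 * ‖p - y‖⁻¹) := by
            refine mul_le_mul_of_nonneg_left ?_ (by positivity)
            have := inv_anti₀ (by positivity : (0:ℝ) < ‖p - y‖ / 2) hTy
            rwa [show (‖p - y‖ / 2)⁻¹ = 2 * ‖p - y‖⁻¹ by field_simp] at this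
        _ = (2 * Real.pi)⁻¹ * ‖p - y‖⁻¹ := by field_simp; ring
    -- far-field integral bound
    have hle : μ ≤ ENNReal.ofReal M • volume := by
      refine Measure.le_iff.mpr fun s _ => ?_
      rw [Measure.smul_apply, smul_eq_mul]
      exact hdens s
    have part2a : ∫⁻ y in B, g y ∂μ ≤ ENNReal.ofReal (3 * M) := by
      calc ∫⁻ y in B, g y ∂μ ≤ ∫⁻ y in B, g y ∂(ENNReal.ofReal M • volume) :=
            lintegral_mono' (Measure.restrict_mono (subset_refl _) hle) le_rfl
        _ = ENNReal.ofReal M * ∫⁻ y in B, g y ∂volume := by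
            rw [Measure.restrict_smul, lintegral_smul_measure, smul_eq_mul]
        _ ≤ ENNReal.ofReal M * (ENNReal.ofReal ((2 * Real.pi)⁻¹)
              * ENNReal.ofReal (16 / 3 * Real.pi)) := by
            refine mul_le_mul_right ?_ _
            have : ∫⁻ y in B, g y ∂volume = ENNReal.ofReal ((2 * Real.pi)⁻¹)
                * ∫⁻ y in B, ENNReal.ofReal ‖p - y‖⁻¹ ∂volume := by
              rw [← lintegral_const_mul' _ _ ENNReal.ofReal_ne_top]
              refine lintegral_congr fun y => ?_
              show ENNReal.ofReal ((2 * Real.pi)⁻¹ * ‖p - y‖⁻¹)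
                = ENNReal.ofReal ((2 * Real.pi)⁻¹) * ENNReal.ofReal ‖p - y‖⁻¹
              exact ENNReal.ofReal_mul (by positivity)
            rw [this]
            exact mul_le_mul_right (lintegral_inv_ball p) _
        _ = ENNReal.ofReal (M * ((2 * Real.pi)⁻¹ * (16 / 3 * Real.pi))) := by
            rw [← ENNReal.ofReal_mul (by positivity), ← ENNReal.ofReal_mul (by positivity)]
        _ ≤ ENNReal.ofReal (3 * M) := by
            refine ENNReal.ofReal_le_ofReal ?_
            rw [show M * ((2 * Real.pi)⁻¹ * (16 / 3 * Real.pi)) = 8 / 3 * M by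
              field_simp; ring]
            linarith
    have part2b : ∫⁻ y in Bᶜ, g y ∂μ ≤ ENNReal.ofReal 1 := by
      calc ∫⁻ y in Bᶜ, g y ∂μ
          ≤ ∫⁻ _ in Bᶜ, ENNReal.ofReal ((2 * Real.pi)⁻¹) ∂μ := by
            refine setLIntegral_mono' hBm.compl fun y hy => ?_
            refine ENNReal.ofReal_le_ofReal ?_
            have h1 : (1:ℝ) ≤ ‖p - y‖ := by
              rw [norm_sub_rev]
              simpa [hB, Metric.mem_ball, dist_eq_norm] using hy
            have h2 : ‖p - y‖⁻¹ ≤ 1 := by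
              rw [inv_le_one_iff₀]; right; exact h1
            calc (2 * Real.pi)⁻¹ * ‖p - y‖⁻¹ ≤ (2 * Real.pi)⁻¹ * 1 :=
                  mul_le_mul_of_nonneg_left h2 (by positivity)
              _ = (2 * Real.pi)⁻¹ := mul_one _
        _ = ENNReal.ofReal ((2 * Real.pi)⁻¹) * μ Bᶜ := by
            rw [MeasureTheory.setLIntegral_const]
        _ ≤ ENNReal.ofReal ((2 * Real.pi)⁻¹) * 1 := mul_le_mul_right prob_le_one _
        _ ≤ ENNReal.ofReal 1 := by
            rw [mul_one]
            refine ENNReal.ofReal_le_ofReal ?_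
            rw [inv_le_one_iff₀]; right; linarith [Real.pi_gt_three]
    calc ∫⁻ y, ENNReal.ofReal ‖f y‖ ∂μ
        = (∫⁻ y in A, ENNReal.ofReal ‖f y‖ ∂μ) + ∫⁻ y in Aᶜ, ENNReal.ofReal ‖f y‖ ∂μ :=
          (lintegral_add_compl _ hAm).symm
      _ ≤ ENNReal.ofReal (32 / 3 * (M * W ^ 3 / dmin)) + ∫⁻ y in Aᶜ, g y ∂μ :=
          add_le_add part1 part2
      _ ≤ ENNReal.ofReal (32 / 3 * (M * W ^ 3 / dmin)) + ∫⁻ y, g y ∂μ :=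
          add_le_add_right (setLIntegral_le_lintegral _ _) _
      _ = ENNReal.ofReal (32 / 3 * (M * W ^ 3 / dmin))
          + ((∫⁻ y in B, g y ∂μ) + ∫⁻ y in Bᶜ, g y ∂μ) := by
          rw [lintegral_add_compl _ hBm]
      _ ≤ ENNReal.ofReal (32 / 3 * (M * W ^ 3 / dmin))
          + (ENNReal.ofReal (3 * M) + ENNReal.ofReal 1) :=
          add_le_add_right (add_le_add part2a part2b) _
      _ = ENNReal.ofReal (32 / 3 * (M * W ^ 3 / dmin) + (3 * M + 1)) := by
          rw [← ENNReal.ofReal_add (by positivity) (by norm_num),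
            ← ENNReal.ofReal_add (by positivity) (by positivity)]
      _ ≤ ENNReal.ofReal (11 * (M * W ^ 3 / dmin + M + 1)) := by
          refine ENNReal.ofReal_le_ofReal ?_
          have h1 : (0:ℝ) ≤ M * W ^ 3 / dmin := by positivity
          nlinarith
  calc ‖∫ y, truncOseen χ dmin (p - T y) ∂μ‖
      ≤ (∫⁻ y, ENNReal.ofReal ‖f y‖ ∂μ).toReal := norm_integral_le_lintegral_norm f
    _ ≤ (ENNReal.ofReal (11 * (M * W ^ 3 / dmin + M + 1))).toReal :=
        ENNReal.toReal_mono ENNReal.ofReal_ne_top key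
    _ = 11 * (M * W ^ 3 / dmin + M + 1) := ENNReal.toReal_ofReal (by positivity)

end
end

section
/- Let ρ : ℝ³ → ℝ be a measurable function belonging to L¹(ℝ³) ∩ L^∞(ℝ³) and let g₀ ∈ ℝ³ be a fixed vector. Then the Oseen convolution v(x) := ∫_{ℝ³} Φ(x − y)·g₀·ρ(y) dy is well defined for every x ∈ ℝ³ (the integrand is absolutely integrable), and v is Lipschitz continuous: there is a universal constant C > 0 such that ‖v(x) − v(x')‖ ≤ C·‖g₀‖·(‖ρ‖_{L¹} + ‖ρ‖_{L^∞})·‖x − x'‖ for all x, x' ∈ ℝ³. -/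
open MeasureTheory
open scoped ENNReal NNReal

noncomputable section

section Aux
open MeasureTheory Measure Set Metric

lemma lintegral_radial_E3 (p : ℝ → ENNReal) (hp : Measurable p) :
    ∫⁻ x : E3, p ‖x‖ = 3 * volume (ball (0:E3) 1) *
      ∫⁻ y in Set.Ioi (0:ℝ), ENNReal.ofReal (y ^ 2) * p y := by
  have hdim : Module.finrank ℝ E3 = 3 := by simp
  have h2 : Module.finrank ℝ E3 - 1 = 2 := by rw [hdim]
  have mp := Measure.measurePreserving_homeomorphUnitSphereProd (volume : Measure E3)
  rw [h2] at mp
  calc ∫⁻ x : E3, p ‖x‖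
      = ∫⁻ x : ({(0:E3)}ᶜ : Set E3), p ‖x.1‖ ∂((volume : Measure E3).comap Subtype.val) := by
        rw [lintegral_subtype_comap (MeasurableSet.compl (measurableSet_singleton (0:E3)))
          (fun x => p ‖x‖), restrict_compl_singleton]
    _ = ∫⁻ z : sphere (0:E3) 1 × Ioi (0:ℝ), p z.2.1
          ∂((volume : Measure E3).toSphere.prod (.volumeIoiPow 2)) := by
        simpa [homeomorphUnitSphereProd] using mp.lintegral_comp (f := fun z => p z.2.1) (by fun_prop)
    _ = (volume : Measure E3).toSphere univ *
          ∫⁻ r : Ioi (0:ℝ), p r.1 ∂(Measure.volumeIoiPow 2) := by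
        rw [lintegral_prod _ (by fun_prop)]
        simp only [lintegral_const]
        exact mul_comm _ _
    _ = 3 * volume (ball (0:E3) 1) * ∫⁻ y in Set.Ioi (0:ℝ), ENNReal.ofReal (y ^ 2) * p y := by
        have hv : Measure.volumeIoiPow 2 =
            Measure.withDensity (comap Subtype.val volume) (fun r : Ioi (0:ℝ) =>
              ENNReal.ofReal (r.1 ^ 2)) := rfl
        have hIoi : ∫⁻ r : Ioi (0:ℝ), p r.1 ∂(Measure.volumeIoiPow 2)
            = ∫⁻ y in Set.Ioi (0:ℝ), ENNReal.ofReal (y ^ 2) * p y := by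
          rw [hv,
            lintegral_withDensity_eq_lintegral_mul _ (by fun_prop)
              ((by fun_prop : Measurable fun r : Ioi (0:ℝ) => p r.1))]
          exact lintegral_subtype_comap measurableSet_Ioi (fun y => ENNReal.ofReal (y ^ 2) * p y)
        rw [Measure.toSphere_apply_univ, hdim, hIoi]
        norm_num

lemma oseen_apply (z g : E3) : oseenTensor z g =
    (8 * Real.pi)⁻¹ • ((‖z‖⁻¹ • g) + (‖z‖ ^ 3)⁻¹ • (inner ℝ z g : ℝ) • z) := by
  simp [oseenTensor]

lemma oseen_norm_le (z g : E3) : ‖oseenTensor z g‖ ≤ ‖z‖⁻¹ * ‖g‖ := by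
  have hpi : (1:ℝ) ≤ 4 * Real.pi := by nlinarith [Real.pi_gt_three]
  rw [oseen_apply]
  rw [norm_smul]
  have h1 : ‖(‖z‖⁻¹ • g) + (‖z‖ ^ 3)⁻¹ • (inner ℝ z g : ℝ) • z‖ ≤ 2 * (‖z‖⁻¹ * ‖g‖) := by
    refine (norm_add_le _ _).trans ?_
    have e1 : ‖(‖z‖⁻¹ • g)‖ = ‖z‖⁻¹ * ‖g‖ := by
      rw [norm_smul]; simp [abs_of_nonneg, norm_nonneg]
    have e2 : ‖(‖z‖ ^ 3)⁻¹ • (inner ℝ z g : ℝ) • z‖ ≤ ‖z‖⁻¹ * ‖g‖ := by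
      rw [norm_smul, norm_smul]
      rcases eq_or_ne z 0 with rfl | hz
      · simp
      · have hz0 : 0 < ‖z‖ := norm_pos_iff.mpr hz
        have hip : |(inner ℝ z g : ℝ)| ≤ ‖z‖ * ‖g‖ := abs_real_inner_le_norm z g
        have : ‖(‖z‖ ^ 3)⁻¹‖ = (‖z‖ ^ 3)⁻¹ := by
          rw [Real.norm_eq_abs, abs_of_nonneg]; positivity
        rw [this, Real.norm_eq_abs]
        calc (‖z‖ ^ 3)⁻¹ * (|(inner ℝ z g : ℝ)| * ‖z‖)
            ≤ (‖z‖ ^ 3)⁻¹ * ((‖z‖ * ‖g‖) * ‖z‖) := by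
              gcongr
          _ = ‖z‖⁻¹ * ‖g‖ := by field_simp
    linarith [e1, e2]
  calc ‖(8 * Real.pi)⁻¹‖ * ‖(‖z‖⁻¹ • g) + (‖z‖ ^ 3)⁻¹ • (inner ℝ z g : ℝ) • z‖
      ≤ (8 * Real.pi)⁻¹ * (2 * (‖z‖⁻¹ * ‖g‖)) := by
        have : ‖(8 * Real.pi)⁻¹‖ = (8 * Real.pi)⁻¹ := by
          rw [Real.norm_eq_abs, abs_of_nonneg]; positivity
        rw [this]; gcongr
    _ ≤ ‖z‖⁻¹ * ‖g‖ := by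
        have h2 : (8 * Real.pi)⁻¹ * 2 ≤ 1 := by
          rw [inv_mul_le_iff₀ (by positivity)]; nlinarith [Real.pi_gt_three]
        have h3 : 0 ≤ ‖z‖⁻¹ * ‖g‖ := by positivity
        nlinarith

set_option maxHeartbeats 1000000 in
lemma oseen_diff_le (a b g : E3) (hd : ‖a - b‖ ≤ ‖a‖ / 2) :
    ‖oseenTensor a g - oseenTensor b g‖ ≤ 100 * (‖a‖ ^ 2)⁻¹ * ‖g‖ * ‖a - b‖ := by
  rcases eq_or_ne a 0 with rfl | ha
  · have : b = 0 := by
      have : ‖(0:E3) - b‖ ≤ 0 := by simpa using hd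
      have hb := norm_nonneg ((0:E3) - b)
      have : ‖(0:E3) - b‖ = 0 := le_antisymm this hb
      simpa [eq_comm, sub_eq_zero] using norm_eq_zero.mp this
    subst this; simp
  set na := ‖a‖ with hna_def
  set nb := ‖b‖ with hnb_def
  set d := ‖a - b‖ with hd_def
  have hna : 0 < na := norm_pos_iff.mpr ha
  have hd0 : 0 ≤ d := norm_nonneg _
  have habs : |na - nb| ≤ d := abs_norm_sub_norm_le a b
  have hnb1 : na / 2 ≤ nb := by
    have := abs_le.mp habs
    linarith [this.2]
  have hnb2 : nb ≤ 3 / 2 * na := by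
    have := abs_le.mp habs
    linarith [this.1]
  have hnb : 0 < nb := by linarith
  have hg : (0:ℝ) ≤ ‖g‖ := norm_nonneg g
  -- vector identity
  have hinner : (inner ℝ a g : ℝ) = inner ℝ (a - b) g + inner ℝ b g := by
    rw [inner_sub_left]; ring
  have hid : oseenTensor a g - oseenTensor b g =
      (8 * Real.pi)⁻¹ • (((na⁻¹ - nb⁻¹) • g) +
        (((na ^ 3)⁻¹ • ((inner ℝ (a-b) g : ℝ) • a)) +
         ((na ^ 3)⁻¹ • ((inner ℝ b g : ℝ) • (a - b))) +
         (((na ^ 3)⁻¹ - (nb ^ 3)⁻¹) • ((inner ℝ b g : ℝ) • b)))) := by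
    rw [oseen_apply, oseen_apply, ← smul_sub, hinner]
    congr 1
    module
  rw [hid, norm_smul]
  clear hid hinner
  have hpi : ‖(8 * Real.pi)⁻¹‖ ≤ 1 := by
    rw [Real.norm_eq_abs, abs_of_nonneg (by positivity)]
    rw [inv_le_one₀ (by positivity)]; nlinarith [Real.pi_gt_three]
  have hi1 : |(inner ℝ (a-b) g : ℝ)| ≤ d * ‖g‖ := by
    simpa using abs_real_inner_le_norm (a-b) g
  have hi2 : |(inner ℝ b g : ℝ)| ≤ nb * ‖g‖ := by
    simpa using abs_real_inner_le_norm b g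
  clear_value na nb d
  -- term bounds
  have t1 : ‖(na⁻¹ - nb⁻¹) • g‖ ≤ 2 * d / na ^ 2 * ‖g‖ := by
    rw [norm_smul, Real.norm_eq_abs]
    have key : na⁻¹ - nb⁻¹ = (nb - na) * (na * nb)⁻¹ := by
      field_simp
    rw [key, abs_mul, abs_of_nonneg (by positivity : (0:ℝ) ≤ (na*nb)⁻¹)]
    have h1 : |nb - na| ≤ d := by rwa [abs_sub_comm]
    have h2 : (na * nb)⁻¹ ≤ 2 / na ^ 2 := by
      rw [inv_le_iff_one_le_mul₀ (by positivity)]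
      rw [div_mul_eq_mul_div, le_div_iff₀ (by positivity)]
      nlinarith
    calc |nb - na| * (na * nb)⁻¹ * ‖g‖ ≤ d * (2 / na ^ 2) * ‖g‖ := by gcongr
      _ = 2 * d / na ^ 2 * ‖g‖ := by ring
  have t2 : ‖(na ^ 3)⁻¹ • ((inner ℝ (a-b) g : ℝ) • a)‖ ≤ d / na ^ 2 * ‖g‖ := by
    rw [norm_smul, norm_smul, Real.norm_eq_abs, Real.norm_eq_abs,
      abs_of_nonneg (by positivity : (0:ℝ) ≤ (na^3)⁻¹), ← hna_def]
    calc (na ^ 3)⁻¹ * (|(inner ℝ (a-b) g : ℝ)| * na) ≤ (na ^ 3)⁻¹ * ((d * ‖g‖) * na) := by gcongr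
      _ = d / na ^ 2 * ‖g‖ := by field_simp
  have t3 : ‖(na ^ 3)⁻¹ • ((inner ℝ b g : ℝ) • (a - b))‖ ≤ 3 / 2 * d / na ^ 2 * ‖g‖ := by
    rw [norm_smul, norm_smul, Real.norm_eq_abs, Real.norm_eq_abs,
      abs_of_nonneg (by positivity : (0:ℝ) ≤ (na^3)⁻¹), ← hd_def]
    have hi2' : |(inner ℝ b g : ℝ)| ≤ 3/2*na * ‖g‖ := by nlinarith
    calc (na ^ 3)⁻¹ * (|(inner ℝ b g : ℝ)| * d) ≤ (na ^ 3)⁻¹ * ((3/2*na * ‖g‖) * d) := by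
          gcongr
      _ = 3 / 2 * d / na ^ 2 * ‖g‖ := by field_simp
  have t4 : ‖((na ^ 3)⁻¹ - (nb ^ 3)⁻¹) • ((inner ℝ b g : ℝ) • b)‖ ≤ 86 * d / na ^ 2 * ‖g‖ := by
    rw [norm_smul, norm_smul, Real.norm_eq_abs, Real.norm_eq_abs, ← hnb_def]
    have key : (na ^ 3)⁻¹ - (nb ^ 3)⁻¹ = (nb ^ 3 - na ^ 3) * (na ^ 3 * nb ^ 3)⁻¹ := by
      field_simp
    have h1 : |nb ^ 3 - na ^ 3| ≤ 19 / 4 * d * na ^ 2 := by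
      have e : nb ^ 3 - na ^ 3 = (nb - na) * (nb ^ 2 + na * nb + na ^ 2) := by ring
      rw [e, abs_mul]
      have h1a : |nb - na| ≤ d := by rwa [abs_sub_comm]
      have c1 : nb ^ 2 ≤ 9 / 4 * na ^ 2 := by nlinarith [hnb2, hnb.le, hna.le]
      have c2 : na * nb ≤ 3 / 2 * na ^ 2 := by nlinarith [hnb2, hna.le]
      have h1b : |nb ^ 2 + na * nb + na ^ 2| ≤ 19 / 4 * na ^ 2 := by
        rw [abs_of_nonneg (by positivity)]
        linarith
      calc |nb - na| * |nb ^ 2 + na * nb + na ^ 2| ≤ d * (19 / 4 * na ^ 2) := by gcongr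
        _ = 19 / 4 * d * na ^ 2 := by ring
    have h2 : (na ^ 3 * nb ^ 3)⁻¹ ≤ 8 / na ^ 6 := by
      rw [show (8:ℝ)/na^6 = (na^6/8)⁻¹ by rw [inv_div]]
      refine inv_anti₀ (by positivity) ?_
      have c3 : (na/2) ^ 3 ≤ nb ^ 3 := pow_le_pow_left₀ (by positivity) hnb1 3
      nlinarith [pow_pos hna 3, c3]
    have hb2 : |(inner ℝ b g : ℝ)| * nb ≤ 9 / 4 * na ^ 2 * ‖g‖ := by
      calc |(inner ℝ b g : ℝ)| * nb ≤ (nb * ‖g‖) * nb := by gcongr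
        _ = nb ^ 2 * ‖g‖ := by ring
        _ ≤ 9 / 4 * na ^ 2 * ‖g‖ := by
            have c1 : nb ^ 2 ≤ 9 / 4 * na ^ 2 := by nlinarith [hnb2, hnb.le, hna.le]
            nlinarith [c1, hg]
    rw [key, abs_mul, abs_of_nonneg (by positivity : (0:ℝ) ≤ (na^3*nb^3)⁻¹)]
    calc |nb ^ 3 - na ^ 3| * (na ^ 3 * nb ^ 3)⁻¹ * (|(inner ℝ b g : ℝ)| * nb)
        ≤ (19 / 4 * d * na ^ 2) * (8 / na ^ 6) * (9 / 4 * na ^ 2 * ‖g‖) := by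
          gcongr
      _ = 171/2 * d / na ^ 2 * ‖g‖ := by field_simp; ring
      _ ≤ 86 * d / na ^ 2 * ‖g‖ := by
          have hx : (0:ℝ) ≤ d / na ^ 2 * ‖g‖ := by positivity
          have e : 86 * d / na ^ 2 * ‖g‖ - 171 / 2 * d / na ^ 2 * ‖g‖
              = 1 / 2 * (d / na ^ 2 * ‖g‖) := by ring
          linarith
  -- assemble
  have hw : ‖((na⁻¹ - nb⁻¹) • g) +
        (((na ^ 3)⁻¹ • ((inner ℝ (a-b) g : ℝ) • a)) +
         ((na ^ 3)⁻¹ • ((inner ℝ b g : ℝ) • (a - b))) +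
         (((na ^ 3)⁻¹ - (nb ^ 3)⁻¹) • ((inner ℝ b g : ℝ) • b)))‖ ≤ 100 * d / na ^ 2 * ‖g‖ := by
    refine (norm_add_le _ _).trans ?_
    have := norm_add₃_le (a := ((na ^ 3)⁻¹ • ((inner ℝ (a-b) g : ℝ) • a)))
      (b := ((na ^ 3)⁻¹ • ((inner ℝ b g : ℝ) • (a - b))))
      (c := (((na ^ 3)⁻¹ - (nb ^ 3)⁻¹) • ((inner ℝ b g : ℝ) • b)))
    have e1 : 2 * d / na ^ 2 * ‖g‖ = 2 * (d / na ^ 2 * ‖g‖) := by ring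
    have e2 : d / na ^ 2 * ‖g‖ = 1 * (d / na ^ 2 * ‖g‖) := by ring
    have e3 : 3 / 2 * d / na ^ 2 * ‖g‖ = 3 / 2 * (d / na ^ 2 * ‖g‖) := by ring
    have e4 : 86 * d / na ^ 2 * ‖g‖ = 86 * (d / na ^ 2 * ‖g‖) := by ring
    have e5 : 100 * d / na ^ 2 * ‖g‖ = 100 * (d / na ^ 2 * ‖g‖) := by ring
    have hx : (0:ℝ) ≤ d / na ^ 2 * ‖g‖ := by positivity
    linarith
  calc ‖(8 * Real.pi)⁻¹‖ * ‖_‖ ≤ 1 * (100 * d / na ^ 2 * ‖g‖) := by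
        exact mul_le_mul hpi hw (norm_nonneg _) one_pos.le
    _ ≤ 100 * (na ^ 2)⁻¹ * ‖g‖ * d := by
        rw [one_mul]
        have : 100 * d / na ^ 2 * ‖g‖ = 100 * (na ^ 2)⁻¹ * ‖g‖ * d := by
          field_simp
        rw [this]




lemma lint_ball_radial (R : ℝ) (q : ℝ → ℝ) (hq : Measurable q) :
    ∫⁻ z : E3 in ball 0 R, ENNReal.ofReal (q ‖z‖) =
      3 * volume (ball (0:E3) 1) * ∫⁻ y in Set.Ioo 0 R, ENNReal.ofReal (y ^ 2 * q y) := by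
  have h1 : ∫⁻ z : E3 in ball 0 R, ENNReal.ofReal (q ‖z‖) =
      ∫⁻ z : E3, (fun y => ENNReal.ofReal ((Set.Iio R).indicator q y)) ‖z‖ := by
    rw [← lintegral_indicator measurableSet_ball]
    congr 1 with z
    by_cases h : ‖z‖ < R <;>
      simp [Set.indicator_apply, mem_ball_zero_iff, Set.mem_Iio, h]
  have h1' := lintegral_radial_E3 (fun y => ENNReal.ofReal ((Set.Iio R).indicator q y))
    ((hq.indicator measurableSet_Iio).ennreal_ofReal)
  rw [h1, h1']
  congr 1
  have h2 : ∀ y ∈ Set.Ioi (0:ℝ),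
      ENNReal.ofReal (y ^ 2) * ENNReal.ofReal ((Set.Iio R).indicator q y)
        = (Set.Ioo 0 R).indicator (fun y => ENNReal.ofReal (y ^ 2 * q y)) y := by
    intro y hy
    by_cases hyR : y < R
    · simp [Set.indicator_apply, Set.mem_Ioo, hyR, Set.mem_Ioi.mp hy,
        ← ENNReal.ofReal_mul (sq_nonneg y)]
    · simp [Set.indicator_apply, Set.mem_Ioo, hyR]
  rw [setLIntegral_congr_fun measurableSet_Ioi h2,
    lintegral_indicator measurableSet_Ioo, Measure.restrict_restrict measurableSet_Ioo,
    Set.inter_eq_left.mpr (fun y hy => hy.1)]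

def cV : ℝ := 3 * (volume (ball (0:E3) 1)).toReal

lemma cV_nonneg : 0 ≤ cV := mul_nonneg (by norm_num) ENNReal.toReal_nonneg

lemma ofReal_cV : ENNReal.ofReal cV = 3 * volume (ball (0:E3) 1) := by
  rw [cV, ENNReal.ofReal_mul (by norm_num)]
  rw [ENNReal.ofReal_toReal measure_ball_lt_top.ne]
  norm_num

lemma lint_ball_inv (R : ℝ) (hR : 0 < R) :
    ∫⁻ z : E3 in ball 0 R, ENNReal.ofReal ‖z‖⁻¹ ≤ ENNReal.ofReal (cV * R ^ 2) := by
  rw [lint_ball_radial R (fun t => t⁻¹) measurable_inv]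
  have h2 : ∀ y ∈ Set.Ioo (0:ℝ) R, ENNReal.ofReal (y ^ 2 * y⁻¹) = ENNReal.ofReal y := by
    intro y hy
    congr 1
    field_simp [hy.1.ne']
  rw [setLIntegral_congr_fun measurableSet_Ioo h2]
  have h3 : ∫⁻ y in Set.Ioo (0:ℝ) R, ENNReal.ofReal y = ENNReal.ofReal (R ^ 2 / 2) := by
    have hInt : IntegrableOn (fun y : ℝ => y) (Set.Ioc 0 R) volume :=
      (intervalIntegral.intervalIntegrable_id (μ := volume) (a := 0) (b := R)).1
    have heq := ofReal_integral_eq_lintegral_ofReal hInt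
      ((ae_restrict_mem measurableSet_Ioc).mono fun y hy => hy.1.le)
    have hid : (∫ x in (0:ℝ)..R, x) = (R ^ 2 - 0 ^ 2) / 2 := by
      open intervalIntegral in rw [integral_id]
    rw [restrict_congr_set Ioo_ae_eq_Ioc, ← heq, ← intervalIntegral.integral_of_le hR.le, hid]
    norm_num
  rw [h3, ← ofReal_cV, ← ENNReal.ofReal_mul cV_nonneg]
  apply ENNReal.ofReal_le_ofReal
  nlinarith [cV_nonneg, sq_nonneg R]

lemma lint_ball_inv_sq :
    ∫⁻ z : E3 in ball 0 1, ENNReal.ofReal ((‖z‖ ^ 2)⁻¹) ≤ ENNReal.ofReal cV := by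
  rw [lint_ball_radial 1 (fun t => (t ^ 2)⁻¹) (by fun_prop)]
  have h2 : ∀ y ∈ Set.Ioo (0:ℝ) 1, ENNReal.ofReal (y ^ 2 * (y ^ 2)⁻¹) = 1 := by
    intro y hy
    rw [mul_inv_cancel₀ (pow_pos hy.1 2).ne']
    simp
  rw [setLIntegral_congr_fun measurableSet_Ioo h2]
  rw [setLIntegral_const, Real.volume_Ioo, ofReal_cV]
  simp

lemma lint_ball_shift (c : E3) (R : ℝ) (F : E3 → ENNReal) (hF : Measurable F) :
    ∫⁻ y : E3 in ball c R, F (c - y) = ∫⁻ z : E3 in ball 0 R, F z := by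
  rw [← lintegral_indicator measurableSet_ball, ← lintegral_indicator measurableSet_ball]
  have h : ∀ y : E3, (ball c R).indicator (fun y => F (c - y)) y
      = (ball 0 R).indicator F (c - y) := by
    intro y
    have hmem : y ∈ ball c R ↔ c - y ∈ ball (0:E3) R := by
      rw [mem_ball_iff_norm', mem_ball_zero_iff]
    by_cases h : y ∈ ball c R
    · rw [Set.indicator_of_mem h, Set.indicator_of_mem (hmem.mp h)]
    · rw [Set.indicator_of_notMem h, Set.indicator_of_notMem (fun hc => h (hmem.mpr hc))]
  simp_rw [h]
  exact (measurePreserving_sub_left volume c).lintegral_comp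
    (hF.indicator measurableSet_ball)

lemma oseen_meas (x g₀ : E3) : Measurable fun y : E3 => oseenTensor (x - y) g₀ := by
  simp_rw [oseen_apply]
  have m0 : Measurable fun y : E3 => x - y := measurable_const.sub measurable_id
  have m1 : Measurable fun y : E3 => ‖x - y‖ := m0.norm
  have minv : Measurable fun y : E3 => ‖x - y‖⁻¹ := m1.inv
  have m2 : Measurable fun y : E3 => (‖x - y‖ ^ 3)⁻¹ := (m1.pow_const 3).inv
  have m3 : Measurable fun y : E3 => (inner ℝ (x - y) g₀ : ℝ) := m0.inner measurable_const
  exact ((minv.smul_const g₀).add (m2.smul (m3.smul m0))).const_smul ((8 * Real.pi)⁻¹ : ℝ)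

end Aux

section Main
open MeasureTheory Measure Set Metric

set_option maxHeartbeats 1000000 in
/-- for `ρ ∈ L¹(ℝ³) ∩ L^∞(ℝ³)` and a fixed vector `g₀ ∈ ℝ³`, the Oseen
convolution `v(x) = ∫ Φ(x − y) g₀ ρ(y) dy` is well defined (the integrand is integrable
for every `x`) and Lipschitz: there is a universal constant `C > 0` with
`‖v(x) − v(x')‖ ≤ C ‖g₀‖ (‖ρ‖_{L¹} + ‖ρ‖_{L^∞}) ‖x − x'‖` for all `x, x'`. -/
theorem oseen_convolution_integrable_and_lipschitz :
    ∃ C : ℝ, 0 < C ∧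
      ∀ (ρ : E3 → ℝ) (g₀ : E3),
        Integrable ρ (volume : Measure E3) →
        MemLp ρ ⊤ (volume : Measure E3) →
        (∀ x : E3, Integrable (fun y => ρ y • oseenTensor (x - y) g₀) (volume : Measure E3)) ∧
        ∀ x x' : E3,
          ‖(∫ y, ρ y • oseenTensor (x - y) g₀) - ∫ y, ρ y • oseenTensor (x' - y) g₀‖
            ≤ C * ‖g₀‖ * ((∫ y, |ρ y|) + (eLpNorm ρ ⊤ (volume : Measure E3)).toReal)
              * ‖x - x'‖ := by
  refine ⟨400 * (cV + 1), by have := cV_nonneg; linarith, ?_⟩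
  intro ρ g₀ hρInt hρTop
  have hg0 : (0:ℝ) ≤ ‖g₀‖ := norm_nonneg _
  set N : ℝ := (eLpNorm ρ ⊤ (volume : Measure E3)).toReal with hNdef
  have hN0 : 0 ≤ N := ENNReal.toReal_nonneg
  have hbd : ∀ᵐ y : E3 ∂(volume : Measure E3), |ρ y| ≤ N := by
    have h1 : ∀ᵐ y : E3 ∂(volume : Measure E3),
        (‖ρ y‖₊ : ℝ≥0∞) ≤ eLpNormEssSup ρ (volume : Measure E3) := ae_le_eLpNormEssSup
    refine h1.mono fun y hy => ?_
    have h2 : (‖ρ y‖₊ : ℝ≥0∞).toReal ≤ (eLpNormEssSup ρ (volume : Measure E3)).toReal := by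
      refine ENNReal.toReal_mono ?_ hy
      rw [← eLpNorm_exponent_top (f := ρ)]
      exact hρTop.2.ne
    simpa [hNdef, eLpNorm_exponent_top, Real.norm_eq_abs] using h2
  set I : ℝ := ∫ y, |ρ y| with hIdef
  have hI0 : 0 ≤ I := integral_nonneg fun y => abs_nonneg _
  have hlρ : ∫⁻ y, ENNReal.ofReal |ρ y| ∂(volume : Measure E3) = ENNReal.ofReal I :=
    (ofReal_integral_eq_lintegral_ofReal hρInt.abs (ae_of_all _ fun y => abs_nonneg _)).symm
  have hptw : ∀ (x y : E3), ‖ρ y • oseenTensor (x - y) g₀‖ ≤ |ρ y| * (‖x - y‖⁻¹ * ‖g₀‖) := by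
    intro x y
    rw [norm_smul, Real.norm_eq_abs]
    exact mul_le_mul_of_nonneg_left (oseen_norm_le _ _) (abs_nonneg _)
  have hmeas_inv : ∀ x : E3, Measurable fun y : E3 => ENNReal.ofReal ‖x - y‖⁻¹ := fun x =>
    ((measurable_const.sub measurable_id).norm.inv).ennreal_ofReal
  have hshift_inv : ∀ (c : E3) (R : ℝ), (0 < R) →
      ∫⁻ y in ball c R, ENNReal.ofReal ‖c - y‖⁻¹ ≤ ENNReal.ofReal (cV * R ^ 2) := by
    intro c R hR
    have hs := lint_ball_shift c R (fun z => ENNReal.ofReal ‖z‖⁻¹)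
      (measurable_norm.inv.ennreal_ofReal)
    calc ∫⁻ y in ball c R, ENNReal.ofReal ‖c - y‖⁻¹
        = ∫⁻ z in ball (0:E3) R, ENNReal.ofReal ‖z‖⁻¹ := hs
      _ ≤ ENNReal.ofReal (cV * R ^ 2) := lint_ball_inv R hR
  -- single-point bound
  have keyB : ∀ x : E3, ∫⁻ y, ENNReal.ofReal ‖ρ y • oseenTensor (x - y) g₀‖ ∂volume
      ≤ ENNReal.ofReal (‖g₀‖ * (cV * N + I)) := by
    intro x
    rw [← lintegral_add_compl (fun y => ENNReal.ofReal ‖ρ y • oseenTensor (x - y) g₀‖)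
      (measurableSet_ball (x := x) (ε := 1))]
    have hnear : ∫⁻ y in ball x 1, ENNReal.ofReal ‖ρ y • oseenTensor (x - y) g₀‖
        ≤ ENNReal.ofReal (‖g₀‖ * (cV * N)) := by
      have step1 : ∫⁻ y in ball x 1, ENNReal.ofReal ‖ρ y • oseenTensor (x - y) g₀‖
          ≤ ∫⁻ y in ball x 1, ENNReal.ofReal (N * ‖g₀‖) * ENNReal.ofReal ‖x - y‖⁻¹ := by
        refine lintegral_mono_ae ((ae_restrict_of_ae hbd).mono fun y hy => ?_)
        rw [← ENNReal.ofReal_mul (by positivity)]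
        refine ENNReal.ofReal_le_ofReal ?_
        calc ‖ρ y • oseenTensor (x - y) g₀‖ ≤ |ρ y| * (‖x - y‖⁻¹ * ‖g₀‖) := hptw x y
          _ ≤ N * (‖x - y‖⁻¹ * ‖g₀‖) := by
              have hnn : (0:ℝ) ≤ ‖x - y‖⁻¹ * ‖g₀‖ := by positivity
              nlinarith
          _ = N * ‖g₀‖ * ‖x - y‖⁻¹ := by ring
      have step2 : ∫⁻ y in ball x 1, ENNReal.ofReal (N * ‖g₀‖) * ENNReal.ofReal ‖x - y‖⁻¹
          = ENNReal.ofReal (N * ‖g₀‖) * ∫⁻ y in ball x 1, ENNReal.ofReal ‖x - y‖⁻¹ :=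
        lintegral_const_mul' _ _ ENNReal.ofReal_ne_top
      calc ∫⁻ y in ball x 1, ENNReal.ofReal ‖ρ y • oseenTensor (x - y) g₀‖
          ≤ ENNReal.ofReal (N * ‖g₀‖) * ∫⁻ y in ball x 1, ENNReal.ofReal ‖x - y‖⁻¹ := by
            rw [← step2]; exact step1
        _ ≤ ENNReal.ofReal (N * ‖g₀‖) * ENNReal.ofReal (cV * 1 ^ 2) := by
            gcongr
            exact hshift_inv x 1 one_pos
        _ = ENNReal.ofReal (‖g₀‖ * (cV * N)) := by
            rw [← ENNReal.ofReal_mul (by positivity)]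
            congr 1
            ring
    have hfar : ∫⁻ y in (ball x 1)ᶜ, ENNReal.ofReal ‖ρ y • oseenTensor (x - y) g₀‖
        ≤ ENNReal.ofReal (‖g₀‖ * I) := by
      have step1 : ∫⁻ y in (ball x 1)ᶜ, ENNReal.ofReal ‖ρ y • oseenTensor (x - y) g₀‖
          ≤ ∫⁻ y in (ball x 1)ᶜ, ENNReal.ofReal ‖g₀‖ * ENNReal.ofReal |ρ y| := by
        refine lintegral_mono_ae (((ae_restrict_mem measurableSet_ball.compl).mono
          fun y hy => ?_))
        rw [← ENNReal.ofReal_mul hg0]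
        refine ENNReal.ofReal_le_ofReal ?_
        have h1 : (1:ℝ) ≤ ‖x - y‖ := by
          simp only [mem_compl_iff, mem_ball, not_lt] at hy
          rwa [dist_comm, dist_eq_norm] at hy
        have h2 : ‖x - y‖⁻¹ ≤ 1 := inv_le_one_of_one_le₀ h1
        calc ‖ρ y • oseenTensor (x - y) g₀‖ ≤ |ρ y| * (‖x - y‖⁻¹ * ‖g₀‖) := hptw x y
          _ ≤ |ρ y| * (1 * ‖g₀‖) := by
              have := abs_nonneg (ρ y); gcongr
          _ = ‖g₀‖ * |ρ y| := by ring
      calc ∫⁻ y in (ball x 1)ᶜ, ENNReal.ofReal ‖ρ y • oseenTensor (x - y) g₀‖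
          ≤ ∫⁻ y in (ball x 1)ᶜ, ENNReal.ofReal ‖g₀‖ * ENNReal.ofReal |ρ y| := step1
        _ ≤ ∫⁻ y, ENNReal.ofReal ‖g₀‖ * ENNReal.ofReal |ρ y| ∂volume :=
            setLIntegral_le_lintegral _ _
        _ = ENNReal.ofReal ‖g₀‖ * ENNReal.ofReal I := by
            rw [lintegral_const_mul' _ _ ENNReal.ofReal_ne_top, hlρ]
        _ = ENNReal.ofReal (‖g₀‖ * I) := (ENNReal.ofReal_mul hg0).symm
    calc (∫⁻ y in ball x 1, ENNReal.ofReal ‖ρ y • oseenTensor (x - y) g₀‖) +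
          ∫⁻ y in (ball x 1)ᶜ, ENNReal.ofReal ‖ρ y • oseenTensor (x - y) g₀‖
        ≤ ENNReal.ofReal (‖g₀‖ * (cV * N)) + ENNReal.ofReal (‖g₀‖ * I) :=
          add_le_add hnear hfar
      _ = ENNReal.ofReal (‖g₀‖ * (cV * N + I)) := by
          rw [← ENNReal.ofReal_add (mul_nonneg hg0 (mul_nonneg cV_nonneg hN0))
            (mul_nonneg hg0 hI0)]
          ring_nf
  -- Part 1: integrability
  have hint : ∀ x : E3, Integrable (fun y => ρ y • oseenTensor (x - y) g₀)
      (volume : Measure E3) := by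
    intro x
    refine ⟨hρInt.aestronglyMeasurable.smul (oseen_meas x g₀).aestronglyMeasurable, ?_⟩
    rw [hasFiniteIntegral_iff_norm]
    exact lt_of_le_of_lt (keyB x) ENNReal.ofReal_lt_top
  refine ⟨hint, ?_⟩
  -- Part 2: Lipschitz bound
  intro x x'
  rcases eq_or_ne x x' with rfl | hne
  · simp
  have hpos : 0 < ‖x - x'‖ := by
    rw [norm_pos_iff, sub_ne_zero]; exact hne
  set h : ℝ := ‖x - x'‖ with hhdef
  have hdiff : (∫ y, ρ y • oseenTensor (x - y) g₀) - ∫ y, ρ y • oseenTensor (x' - y) g₀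
      = ∫ y, (ρ y • oseenTensor (x - y) g₀ - ρ y • oseenTensor (x' - y) g₀) :=
    (integral_sub (hint x) (hint x')).symm
  rw [hdiff]
  refine le_trans (norm_integral_le_lintegral_norm _) ?_
  have h400 : (0:ℝ) ≤ 400 * (cV + 1) := by have := cV_nonneg; linarith
  refine ENNReal.toReal_le_of_le_ofReal
    (mul_nonneg (mul_nonneg (mul_nonneg h400 hg0) (add_nonneg hI0 hN0)) hpos.le) ?_
  have hmeasG : ∀ x : E3, AEMeasurable
      (fun y => ENNReal.ofReal ‖ρ y • oseenTensor (x - y) g₀‖) (volume : Measure E3) :=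
    fun x => ((hρInt.aestronglyMeasurable.smul
      (oseen_meas x g₀).aestronglyMeasurable).norm.aemeasurable).ennreal_ofReal
  rcases le_or_gt (1:ℝ) (2 * h) with hbig | hsmall
  · -- case A : h ≥ 1/2
    calc ∫⁻ y, ENNReal.ofReal ‖ρ y • oseenTensor (x - y) g₀ -
            ρ y • oseenTensor (x' - y) g₀‖ ∂volume
        ≤ ∫⁻ y, (ENNReal.ofReal ‖ρ y • oseenTensor (x - y) g₀‖ +
            ENNReal.ofReal ‖ρ y • oseenTensor (x' - y) g₀‖) ∂volume := by
          refine lintegral_mono fun y => ?_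
          rw [← ENNReal.ofReal_add (norm_nonneg _) (norm_nonneg _)]
          exact ENNReal.ofReal_le_ofReal (norm_sub_le _ _)
      _ = (∫⁻ y, ENNReal.ofReal ‖ρ y • oseenTensor (x - y) g₀‖ ∂volume) +
          ∫⁻ y, ENNReal.ofReal ‖ρ y • oseenTensor (x' - y) g₀‖ ∂volume :=
          lintegral_add_left' (hmeasG x) _
      _ ≤ ENNReal.ofReal (‖g₀‖ * (cV * N + I)) + ENNReal.ofReal (‖g₀‖ * (cV * N + I)) :=
          add_le_add (keyB x) (keyB x')
      _ = ENNReal.ofReal (2 * (‖g₀‖ * (cV * N + I))) := by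
          rw [← ENNReal.ofReal_add (mul_nonneg hg0 (add_nonneg (mul_nonneg cV_nonneg hN0) hI0))
            (mul_nonneg hg0 (add_nonneg (mul_nonneg cV_nonneg hN0) hI0))]
          ring_nf
      _ ≤ ENNReal.ofReal (400 * (cV + 1) * ‖g₀‖ * (I + N) * h) := by
          refine ENNReal.ofReal_le_ofReal ?_
          have k1 : (0:ℝ) ≤ 2 * h - 1 := by linarith
          have k2 : (0:ℝ) ≤ ‖g₀‖ * (cV * N + I) :=
            mul_nonneg hg0 (add_nonneg (mul_nonneg cV_nonneg hN0) hI0)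
          have k3 : (0:ℝ) ≤ cV := cV_nonneg
          nlinarith [mul_nonneg (mul_nonneg hg0 hI0) k1, mul_nonneg (mul_nonneg hg0 hN0) k1,
            mul_nonneg (mul_nonneg (mul_nonneg k3 hg0) hN0) k1,
            mul_nonneg (mul_nonneg (mul_nonneg k3 hg0) hI0) k1,
            mul_nonneg (mul_nonneg (mul_nonneg k3 hg0) hI0) hpos.le,
            mul_nonneg (mul_nonneg hg0 hN0) hpos.le,
            mul_nonneg (mul_nonneg (mul_nonneg k3 hg0) hN0) hpos.le,
            mul_nonneg (mul_nonneg hg0 hI0) hpos.le]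
  · -- case B : h < 1/2
    rw [← lintegral_add_compl (fun y => ENNReal.ofReal ‖ρ y • oseenTensor (x - y) g₀ -
      ρ y • oseenTensor (x' - y) g₀‖) (measurableSet_ball (x := x) (ε := 2 * h))]
    have hsub : ball x (2 * h) ⊆ ball x' (3 * h) := by
      intro y hy
      rw [mem_ball] at hy ⊢
      have ht := dist_triangle y x x'
      have hxx' : dist x x' = h := by rw [dist_eq_norm]
      linarith
    have hnearB : ∫⁻ y in ball x (2 * h), ENNReal.ofReal ‖ρ y • oseenTensor (x - y) g₀ -
          ρ y • oseenTensor (x' - y) g₀‖ ≤ ENNReal.ofReal (13 * cV * N * ‖g₀‖ * h ^ 2) := by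
      have step1 : ∫⁻ y in ball x (2 * h), ENNReal.ofReal ‖ρ y • oseenTensor (x - y) g₀ -
            ρ y • oseenTensor (x' - y) g₀‖
          ≤ ∫⁻ y in ball x (2 * h), ENNReal.ofReal (N * ‖g₀‖) *
            (ENNReal.ofReal ‖x - y‖⁻¹ + ENNReal.ofReal ‖x' - y‖⁻¹) := by
        refine lintegral_mono_ae ((ae_restrict_of_ae hbd).mono fun y hy => ?_)
        rw [← ENNReal.ofReal_add (by positivity) (by positivity),
          ← ENNReal.ofReal_mul (by positivity)]
        refine ENNReal.ofReal_le_ofReal ?_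
        calc ‖ρ y • oseenTensor (x - y) g₀ - ρ y • oseenTensor (x' - y) g₀‖
            ≤ ‖ρ y • oseenTensor (x - y) g₀‖ + ‖ρ y • oseenTensor (x' - y) g₀‖ :=
              norm_sub_le _ _
          _ ≤ |ρ y| * (‖x - y‖⁻¹ * ‖g₀‖) + |ρ y| * (‖x' - y‖⁻¹ * ‖g₀‖) :=
              add_le_add (hptw x y) (hptw x' y)
          _ ≤ N * (‖x - y‖⁻¹ * ‖g₀‖) + N * (‖x' - y‖⁻¹ * ‖g₀‖) := by
              have k1 : (0:ℝ) ≤ ‖x - y‖⁻¹ * ‖g₀‖ := by positivity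
              have k2 : (0:ℝ) ≤ ‖x' - y‖⁻¹ * ‖g₀‖ := by positivity
              nlinarith
          _ = N * ‖g₀‖ * (‖x - y‖⁻¹ + ‖x' - y‖⁻¹) := by ring
      have step2 : ∫⁻ y in ball x (2 * h), ENNReal.ofReal (N * ‖g₀‖) *
            (ENNReal.ofReal ‖x - y‖⁻¹ + ENNReal.ofReal ‖x' - y‖⁻¹)
          = ENNReal.ofReal (N * ‖g₀‖) *
            ((∫⁻ y in ball x (2 * h), ENNReal.ofReal ‖x - y‖⁻¹) +
             ∫⁻ y in ball x (2 * h), ENNReal.ofReal ‖x' - y‖⁻¹) := by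
        rw [lintegral_const_mul' _ _ ENNReal.ofReal_ne_top,
          lintegral_add_left (hmeas_inv x) _]
      have b1 : ∫⁻ y in ball x (2 * h), ENNReal.ofReal ‖x - y‖⁻¹
          ≤ ENNReal.ofReal (cV * (2 * h) ^ 2) := hshift_inv x (2 * h) (by linarith)
      have b2 : ∫⁻ y in ball x (2 * h), ENNReal.ofReal ‖x' - y‖⁻¹
          ≤ ENNReal.ofReal (cV * (3 * h) ^ 2) := by
        calc ∫⁻ y in ball x (2 * h), ENNReal.ofReal ‖x' - y‖⁻¹
            ≤ ∫⁻ y in ball x' (3 * h), ENNReal.ofReal ‖x' - y‖⁻¹ :=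
              lintegral_mono_set hsub
          _ ≤ ENNReal.ofReal (cV * (3 * h) ^ 2) := hshift_inv x' (3 * h) (by linarith)
      calc ∫⁻ y in ball x (2 * h), ENNReal.ofReal ‖ρ y • oseenTensor (x - y) g₀ -
            ρ y • oseenTensor (x' - y) g₀‖
          ≤ ENNReal.ofReal (N * ‖g₀‖) *
            ((∫⁻ y in ball x (2 * h), ENNReal.ofReal ‖x - y‖⁻¹) +
             ∫⁻ y in ball x (2 * h), ENNReal.ofReal ‖x' - y‖⁻¹) := by
            rw [← step2]; exact step1
        _ ≤ ENNReal.ofReal (N * ‖g₀‖) *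
            (ENNReal.ofReal (cV * (2 * h) ^ 2) + ENNReal.ofReal (cV * (3 * h) ^ 2)) := by
            gcongr
        _ = ENNReal.ofReal (13 * cV * N * ‖g₀‖ * h ^ 2) := by
            rw [← ENNReal.ofReal_add (mul_nonneg cV_nonneg (sq_nonneg _))
              (mul_nonneg cV_nonneg (sq_nonneg _)),
              ← ENNReal.ofReal_mul (mul_nonneg hN0 hg0)]
            congr 1
            ring
    have hfarB : ∫⁻ y in (ball x (2 * h))ᶜ, ENNReal.ofReal ‖ρ y • oseenTensor (x - y) g₀ -
          ρ y • oseenTensor (x' - y) g₀‖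
        ≤ ENNReal.ofReal (100 * ‖g₀‖ * h * (N * cV + I)) := by
      set W : E3 → ℝ≥0∞ := fun y => ENNReal.ofReal (100 * ‖g₀‖ * h) *
        (ENNReal.ofReal N * (ball x 1).indicator
          (fun y => ENNReal.ofReal ((‖x - y‖ ^ 2)⁻¹)) y + ENNReal.ofReal |ρ y|) with hWdef
      have step1 : ∫⁻ y in (ball x (2 * h))ᶜ, ENNReal.ofReal ‖ρ y • oseenTensor (x - y) g₀ -
            ρ y • oseenTensor (x' - y) g₀‖ ≤ ∫⁻ y in (ball x (2 * h))ᶜ, W y := by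
        refine lintegral_mono_ae (((ae_restrict_of_ae hbd).and
          (ae_restrict_mem measurableSet_ball.compl)).mono fun y hy => ?_)
        obtain ⟨hy1, hy2⟩ := hy
        have h2h : 2 * h ≤ ‖x - y‖ := by
          simp only [mem_compl_iff, mem_ball, not_lt] at hy2
          rwa [dist_comm, dist_eq_norm] at hy2
        have hsubeq : (x - y) - (x' - y) = x - x' := by abel
        have hdle : ‖(x - y) - (x' - y)‖ ≤ ‖x - y‖ / 2 := by
          rw [hsubeq]; rw [← hhdef]; linarith
        have hOd := oseen_diff_le (x - y) (x' - y) g₀ hdle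
        rw [hsubeq, ← hhdef] at hOd
        have hGle : ‖ρ y • oseenTensor (x - y) g₀ - ρ y • oseenTensor (x' - y) g₀‖
            ≤ |ρ y| * (100 * (‖x - y‖ ^ 2)⁻¹ * ‖g₀‖ * h) := by
          rw [← smul_sub, norm_smul, Real.norm_eq_abs]
          exact mul_le_mul_of_nonneg_left hOd (abs_nonneg _)
        by_cases hy3 : y ∈ ball x 1
        · have hW : W y = ENNReal.ofReal (100 * ‖g₀‖ * h) *
              (ENNReal.ofReal N * ENNReal.ofReal ((‖x - y‖ ^ 2)⁻¹) + ENNReal.ofReal |ρ y|) := by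
            rw [hWdef]; simp only [Set.indicator_of_mem hy3]
          rw [hW]
          calc ENNReal.ofReal ‖ρ y • oseenTensor (x - y) g₀ - ρ y • oseenTensor (x' - y) g₀‖
              ≤ ENNReal.ofReal (100 * ‖g₀‖ * h * (N * (‖x - y‖ ^ 2)⁻¹)) := by
                refine ENNReal.ofReal_le_ofReal ?_
                refine hGle.trans ?_
                have k1 : (0:ℝ) ≤ (‖x - y‖ ^ 2)⁻¹ := by positivity
                have k2 : |ρ y| * (100 * (‖x - y‖ ^ 2)⁻¹ * ‖g₀‖ * h) -
                    100 * ‖g₀‖ * h * (N * (‖x - y‖ ^ 2)⁻¹)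
                    = (|ρ y| - N) * (100 * (‖x - y‖ ^ 2)⁻¹ * ‖g₀‖ * h) := by ring
                nlinarith [mul_nonneg (mul_nonneg (mul_nonneg (by norm_num : (0:ℝ) ≤ 100) k1)
                  hg0) hpos.le, mul_le_mul_of_nonneg_right (sub_nonneg.mpr hy1)
                  (mul_nonneg (mul_nonneg (mul_nonneg (by norm_num : (0:ℝ) ≤ 100) k1) hg0)
                    hpos.le)]
            _ = ENNReal.ofReal (100 * ‖g₀‖ * h) *
                (ENNReal.ofReal N * ENNReal.ofReal ((‖x - y‖ ^ 2)⁻¹)) := by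
                rw [← ENNReal.ofReal_mul hN0, ← ENNReal.ofReal_mul (by positivity)]
            _ ≤ _ := mul_le_mul_right le_self_add _
        · have hW : W y = ENNReal.ofReal (100 * ‖g₀‖ * h) *
              (ENNReal.ofReal N * 0 + ENNReal.ofReal |ρ y|) := by
            rw [hWdef]; simp only [Set.indicator_of_notMem hy3]
          rw [hW, mul_zero, zero_add]
          have h1le : (1:ℝ) ≤ ‖x - y‖ := by
            simp only [mem_ball, not_lt] at hy3
            rwa [dist_comm, dist_eq_norm] at hy3
          have hinv1 : (‖x - y‖ ^ 2)⁻¹ ≤ 1 := by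
            rw [inv_le_one₀ (by positivity)]
            nlinarith
          rw [← ENNReal.ofReal_mul (by positivity)]
          refine ENNReal.ofReal_le_ofReal ?_
          refine hGle.trans ?_
          have k3 : (0:ℝ) ≤ 100 * ‖g₀‖ * h := by positivity
          nlinarith [mul_nonneg (mul_nonneg hg0 hpos.le) (abs_nonneg (ρ y)),
            mul_le_mul_of_nonneg_left hinv1 (mul_nonneg (abs_nonneg (ρ y)) k3)]
      have mind : Measurable fun y : E3 => (ball x 1).indicator
          (fun y => ENNReal.ofReal ((‖x - y‖ ^ 2)⁻¹)) y :=
        ((((measurable_const.sub measurable_id).norm.pow_const 2).inv.ennreal_ofReal).indicator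
          measurableSet_ball)
      have indint : ∫⁻ y, (ball x 1).indicator
          (fun y => ENNReal.ofReal ((‖x - y‖ ^ 2)⁻¹)) y ∂volume ≤ ENNReal.ofReal cV := by
        rw [lintegral_indicator measurableSet_ball]
        have hs := lint_ball_shift x 1 (fun z => ENNReal.ofReal ((‖z‖ ^ 2)⁻¹))
          ((measurable_norm.pow_const 2).inv.ennreal_ofReal)
        calc ∫⁻ y in ball x 1, ENNReal.ofReal ((‖x - y‖ ^ 2)⁻¹)
            = ∫⁻ z in ball (0:E3) 1, ENNReal.ofReal ((‖z‖ ^ 2)⁻¹) := hs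
          _ ≤ ENNReal.ofReal cV := lint_ball_inv_sq
      calc ∫⁻ y in (ball x (2 * h))ᶜ, ENNReal.ofReal ‖ρ y • oseenTensor (x - y) g₀ -
            ρ y • oseenTensor (x' - y) g₀‖
          ≤ ∫⁻ y in (ball x (2 * h))ᶜ, W y := step1
        _ ≤ ∫⁻ y, W y ∂volume := setLIntegral_le_lintegral _ _
        _ = ENNReal.ofReal (100 * ‖g₀‖ * h) *
            ((ENNReal.ofReal N * ∫⁻ y, (ball x 1).indicator
              (fun y => ENNReal.ofReal ((‖x - y‖ ^ 2)⁻¹)) y ∂volume) + ENNReal.ofReal I) := by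
            rw [hWdef]
            rw [lintegral_const_mul' _ _ ENNReal.ofReal_ne_top]
            rw [lintegral_add_left (mind.const_mul _) _]
            rw [lintegral_const_mul' _ _ ENNReal.ofReal_ne_top, hlρ]
        _ ≤ ENNReal.ofReal (100 * ‖g₀‖ * h) *
            ((ENNReal.ofReal N * ENNReal.ofReal cV) + ENNReal.ofReal I) := by gcongr
        _ = ENNReal.ofReal (100 * ‖g₀‖ * h * (N * cV + I)) := by
            rw [← ENNReal.ofReal_mul hN0, ← ENNReal.ofReal_add (mul_nonneg hN0 cV_nonneg) hI0,
              ← ENNReal.ofReal_mul (by positivity)]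
    calc (∫⁻ y in ball x (2 * h), ENNReal.ofReal ‖ρ y • oseenTensor (x - y) g₀ -
            ρ y • oseenTensor (x' - y) g₀‖) +
          ∫⁻ y in (ball x (2 * h))ᶜ, ENNReal.ofReal ‖ρ y • oseenTensor (x - y) g₀ -
            ρ y • oseenTensor (x' - y) g₀‖
        ≤ ENNReal.ofReal (13 * cV * N * ‖g₀‖ * h ^ 2) +
          ENNReal.ofReal (100 * ‖g₀‖ * h * (N * cV + I)) := add_le_add hnearB hfarB
      _ = ENNReal.ofReal (13 * cV * N * ‖g₀‖ * h ^ 2 + 100 * ‖g₀‖ * h * (N * cV + I)) :=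
          (ENNReal.ofReal_add (mul_nonneg (mul_nonneg (mul_nonneg
              (mul_nonneg (by norm_num : (0:ℝ) ≤ 13) cV_nonneg) hN0) hg0) (sq_nonneg _))
            (mul_nonneg (by positivity) (add_nonneg (mul_nonneg hN0 cV_nonneg) hI0))).symm
      _ ≤ ENNReal.ofReal (400 * (cV + 1) * ‖g₀‖ * (I + N) * h) := by
          refine ENNReal.ofReal_le_ofReal ?_
          have k3 : (0:ℝ) ≤ cV := cV_nonneg
          have hh2 : h ^ 2 ≤ h * (1 / 2) := by nlinarith
          nlinarith [mul_nonneg (mul_nonneg (mul_nonneg k3 hN0) hg0) hpos.le,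
            mul_nonneg (mul_nonneg hg0 hI0) hpos.le,
            mul_nonneg (mul_nonneg hg0 hN0) hpos.le,
            mul_nonneg (mul_nonneg (mul_nonneg k3 hg0) hI0) hpos.le,
            mul_le_mul_of_nonneg_left hh2 (mul_nonneg (mul_nonneg (by linarith : (0:ℝ) ≤ 13 * cV)
              hN0) hg0)]
end Main

end
end
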